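/- arXiv:2308.16065 — 6 statements merged into one kernel-verified Lean document; each statement's English description precedes it below -/
import Mathlib

section
/- For every natural number n, the Plancherel average of (∑_{u∈λ} c_u)² over partitions λ of n equals n(n−1)/2; that is, (1/n!) ∑_{λ⊢n} f_λ² (∑_{u∈λ} c_u)² = n(n−1)/2. Equivalently, since the Plancherel average of ∑_{u∈λ} c_u is 0, the variance of X_n − Y_n under the Plancherel measure is binom(n,2). -/
open scoped BigOperators

namespace PaperStmt

/-- `Y λ = ∑_ℓ λ_ℓ (ℓ - 1)`: each box of row `ℓ` (1-indexed) is counted with weight `ℓ - 1`,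
which is the 0-indexed row coordinate of the box. -/
def Y (μ : YoungDiagram) : ℕ := ∑ c ∈ μ.cells, c.1

/-- `X λ := Y λ'` where `λ'` is the conjugate (transposed) partition. -/
def X (μ : YoungDiagram) : ℕ := Y μ.transpose

/-- The content of a (0-indexed) box `(i, j)` is `j - i`. -/
def content (c : ℕ × ℕ) : ℤ := (c.2 : ℤ) - (c.1 : ℤ)

/-- The hook length of the (0-indexed) box `(i, j)`:
`h_u = (λ_i - j) + (λ'_j - i) + 1` in 1-indexed terms. -/
def hook (μ : YoungDiagram) (c : ℕ × ℕ) : ℕ :=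
  μ.rowLen c.1 + μ.colLen c.2 - c.1 - c.2 - 1

open YoungDiagram

def IsAddable (μ : YoungDiagram) (c : ℕ × ℕ) : Prop :=
  c ∉ μ ∧ (c.1 = 0 ∨ (c.1 - 1, c.2) ∈ μ) ∧ (c.2 = 0 ∨ (c.1, c.2 - 1) ∈ μ)

def IsRemovable (μ : YoungDiagram) (c : ℕ × ℕ) : Prop :=
  c ∈ μ ∧ (c.1 + 1, c.2) ∉ μ ∧ (c.1, c.2 + 1) ∉ μ

instance (μ : YoungDiagram) : DecidablePred (IsAddable μ) := fun c => by
  unfold IsAddable; infer_instance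

instance (μ : YoungDiagram) : DecidablePred (IsRemovable μ) := fun c => by
  unfold IsRemovable; infer_instance

lemma isLowerSet_insert {μ : YoungDiagram} {c : ℕ × ℕ} (h : IsAddable μ c) :
    IsLowerSet ((insert c μ.cells : Finset (ℕ × ℕ)) : Set (ℕ × ℕ)) := by
  intro y x hle hy
  simp only [Finset.coe_insert, Set.mem_insert_iff, YoungDiagram.mem_cells] at *
  obtain ⟨hy1, hy2⟩ := hle
  rcases hy with rfl | hy
  · -- y = c
    rcases eq_or_lt_of_le hy1 with h1 | h1
    · rcases eq_or_lt_of_le hy2 with h2 | h2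
      · left; exact Prod.ext h1 h2
      · right
        rcases h.2.2 with h0 | hm
        · omega
        · exact μ.up_left_mem (by omega) (by omega) hm
    · right
      rcases h.2.1 with h0 | hm
      · omega
      · exact μ.up_left_mem (by omega) (by omega) hm
  · right; exact μ.up_left_mem hy1 hy2 hy

lemma isLowerSet_erase {μ : YoungDiagram} {c : ℕ × ℕ} (h : IsRemovable μ c) :
    IsLowerSet ((μ.cells.erase c : Finset (ℕ × ℕ)) : Set (ℕ × ℕ)) := by
  intro y x hle hy
  simp only [Finset.coe_erase, Set.mem_diff, Set.mem_singleton_iff,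
    YoungDiagram.mem_cells] at *
  obtain ⟨hy1, hy2⟩ := hle
  constructor
  · exact μ.up_left_mem hy1 hy2 hy.1
  · rintro rfl
    rcases eq_or_lt_of_le hy1 with h1 | h1
    · rcases eq_or_lt_of_le hy2 with h2 | h2
      · exact hy.2 (Prod.ext h1 h2).symm
      · exact h.2.2 (μ.up_left_mem (by omega) (by omega) hy.1)
    · exact h.2.1 (μ.up_left_mem (by omega) (by omega) hy.1)


noncomputable def addCell (μ : YoungDiagram) (c : ℕ × ℕ) : YoungDiagram :=
  if h : IsAddable μ c then ⟨insert c μ.cells, isLowerSet_insert h⟩ else μ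

noncomputable def delCell (μ : YoungDiagram) (c : ℕ × ℕ) : YoungDiagram :=
  if h : IsRemovable μ c then ⟨μ.cells.erase c, isLowerSet_erase h⟩ else μ

lemma cells_addCell {μ : YoungDiagram} {c : ℕ × ℕ} (h : IsAddable μ c) :
    (addCell μ c).cells = insert c μ.cells := by simp [addCell, h]

lemma cells_delCell {μ : YoungDiagram} {c : ℕ × ℕ} (h : IsRemovable μ c) :
    (delCell μ c).cells = μ.cells.erase c := by simp [delCell, h]

lemma yd_ext {μ ν : YoungDiagram} (h : μ.cells = ν.cells) : μ = ν := by
  cases μ; cases ν; simpa using h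

lemma mem_addCell {μ : YoungDiagram} {c x : ℕ × ℕ} (h : IsAddable μ c) :
    x ∈ addCell μ c ↔ x = c ∨ x ∈ μ := by
  rw [← YoungDiagram.mem_cells, cells_addCell h]
  simp [YoungDiagram.mem_cells]

lemma mem_delCell {μ : YoungDiagram} {c x : ℕ × ℕ} (h : IsRemovable μ c) :
    x ∈ delCell μ c ↔ x ≠ c ∧ x ∈ μ := by
  rw [← YoungDiagram.mem_cells, cells_delCell h]
  simp [YoungDiagram.mem_cells]

lemma card_addCell {μ : YoungDiagram} {c : ℕ × ℕ} (h : IsAddable μ c) :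
    (addCell μ c).card = μ.card + 1 := by
  show (addCell μ c).cells.card = μ.cells.card + 1
  rw [cells_addCell h, Finset.card_insert_of_notMem (by simpa using h.1)]

lemma card_delCell {μ : YoungDiagram} {c : ℕ × ℕ} (h : IsRemovable μ c) :
    (delCell μ c).card + 1 = μ.card := by
  show (delCell μ c).cells.card + 1 = μ.cells.card
  rw [cells_delCell h]
  exact Finset.card_erase_add_one (by simpa using h.1)

lemma isRemovable_addCell {μ : YoungDiagram} {c : ℕ × ℕ} (h : IsAddable μ c) :
    IsRemovable (addCell μ c) c := by
  refine ⟨(mem_addCell h).2 (Or.inl rfl), ?_, ?_⟩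
  · rw [mem_addCell h]
    rintro (hc | hc)
    · rw [Prod.ext_iff] at hc; simp at hc
    · exact h.1 (μ.up_left_mem (by simp) le_rfl hc)
  · rw [mem_addCell h]
    rintro (hc | hc)
    · rw [Prod.ext_iff] at hc; simp at hc
    · exact h.1 (μ.up_left_mem le_rfl (by simp) hc)

lemma isAddable_delCell {μ : YoungDiagram} {c : ℕ × ℕ} (h : IsRemovable μ c) :
    IsAddable (delCell μ c) c := by
  refine ⟨by rw [mem_delCell h]; simp, ?_, ?_⟩
  · rcases Nat.eq_zero_or_pos c.1 with h0 | h0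
    · exact Or.inl h0
    · refine Or.inr ?_
      rw [mem_delCell h]
      refine ⟨?_, μ.up_left_mem (by omega) le_rfl h.1⟩
      intro he; rw [Prod.ext_iff] at he; simp at he; omega
  · rcases Nat.eq_zero_or_pos c.2 with h0 | h0
    · exact Or.inl h0
    · refine Or.inr ?_
      rw [mem_delCell h]
      refine ⟨?_, μ.up_left_mem le_rfl (by omega) h.1⟩
      intro he; rw [Prod.ext_iff] at he; simp at he; omega

lemma delCell_addCell {μ : YoungDiagram} {c : ℕ × ℕ} (h : IsAddable μ c) :
    delCell (addCell μ c) c = μ := by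
  apply yd_ext
  rw [cells_delCell (isRemovable_addCell h), cells_addCell h,
    Finset.erase_insert (by simpa using h.1)]

lemma addCell_delCell {μ : YoungDiagram} {c : ℕ × ℕ} (h : IsRemovable μ c) :
    addCell (delCell μ c) c = μ := by
  apply yd_ext
  rw [cells_addCell (isAddable_delCell h), cells_delCell h,
    Finset.insert_erase (by simpa using h.1)]


lemma swap_mem {μ : YoungDiagram} {b r : ℕ × ℕ} (hbr : b ≠ r) :
    (IsAddable μ b ∧ IsRemovable (addCell μ b) r) ↔
      (IsRemovable μ r ∧ IsAddable (delCell μ r) b) := by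
  constructor
  · rintro ⟨h1, h2⟩
    have hrμ : r ∈ μ := by
      rcases (mem_addCell h1).1 h2.1 with h | h
      · exact absurd h.symm hbr
      · exact h
    have hrem : IsRemovable μ r :=
      ⟨hrμ, fun hc => h2.2.1 ((mem_addCell h1).2 (Or.inr hc)),
        fun hc => h2.2.2 ((mem_addCell h1).2 (Or.inr hc))⟩
    refine ⟨hrem, ?_, ?_, ?_⟩
    · rw [mem_delCell hrem]; rintro ⟨-, hb⟩; exact h1.1 hb
    · rcases Nat.eq_zero_or_pos b.1 with h0 | hpos
      · exact Or.inl h0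
      · rcases h1.2.1 with h0 | hm
        · omega
        · refine Or.inr ((mem_delCell hrem).2 ⟨?_, hm⟩)
          intro he
          apply h2.2.1
          rw [mem_addCell h1]
          left
          rw [Prod.ext_iff] at he ⊢
          simp at he ⊢
          omega
    · rcases Nat.eq_zero_or_pos b.2 with h0 | hpos
      · exact Or.inl h0
      · rcases h1.2.2 with h0 | hm
        · omega
        · refine Or.inr ((mem_delCell hrem).2 ⟨?_, hm⟩)
          intro he
          apply h2.2.2
          rw [mem_addCell h1]
          left
          rw [Prod.ext_iff] at he ⊢
          simp at he ⊢
          omega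
  · rintro ⟨h1, h2⟩
    have hbμ : b ∉ μ := by
      intro hb
      exact h2.1 ((mem_delCell h1).2 ⟨hbr, hb⟩)
    have hadd : IsAddable μ b := by
      refine ⟨hbμ, ?_, ?_⟩
      · rcases h2.2.1 with h0 | hm
        · exact Or.inl h0
        · exact Or.inr ((mem_delCell h1).1 hm).2
      · rcases h2.2.2 with h0 | hm
        · exact Or.inl h0
        · exact Or.inr ((mem_delCell h1).1 hm).2
    refine ⟨hadd, (mem_addCell hadd).2 (Or.inr h1.1), ?_, ?_⟩
    · rw [mem_addCell hadd]
      rintro (he | hm)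
      · -- b = (r.1+1, r.2): contradict addability of b in delCell μ r
        rcases h2.2.1 with h0 | hm2
        · rw [Prod.ext_iff] at he; simp at he; omega
        · have : (b.1 - 1, b.2) = r := by
            rw [Prod.ext_iff] at he ⊢; simp at he ⊢; omega
          rw [this, mem_delCell h1] at hm2
          exact hm2.1 rfl
      · exact h1.2.1 hm
    · rw [mem_addCell hadd]
      rintro (he | hm)
      · rcases h2.2.2 with h0 | hm2
        · rw [Prod.ext_iff] at he; simp at he; omega
        · have : (b.1, b.2 - 1) = r := by
            rw [Prod.ext_iff] at he ⊢; simp at he ⊢; omega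
          rw [this, mem_delCell h1] at hm2
          exact hm2.1 rfl
      · exact h1.2.2 hm

lemma swap_eq {μ : YoungDiagram} {b r : ℕ × ℕ} (hbr : b ≠ r)
    (h1 : IsAddable μ b) (h2 : IsRemovable (addCell μ b) r) :
    delCell (addCell μ b) r = addCell (delCell μ r) b := by
  obtain ⟨h1', h2'⟩ := (swap_mem hbr).1 ⟨h1, h2⟩
  apply yd_ext
  rw [cells_delCell h2, cells_addCell h1, cells_addCell h2', cells_delCell h1',
    Finset.erase_insert_of_ne hbr]

def remSet (μ : YoungDiagram) : Finset (ℕ × ℕ) := μ.cells.filter (IsRemovable μ)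
def addSet (μ : YoungDiagram) : Finset (ℕ × ℕ) :=
  ((Finset.range (μ.colLen 0 + 1)) ×ˢ (Finset.range (μ.rowLen 0 + 1))).filter (IsAddable μ)

lemma mem_remSet {μ : YoungDiagram} {c : ℕ × ℕ} : c ∈ remSet μ ↔ IsRemovable μ c := by
  simp only [remSet, Finset.mem_filter, YoungDiagram.mem_cells, and_iff_right_iff_imp]
  exact fun h => h.1

lemma mem_addSet {μ : YoungDiagram} {c : ℕ × ℕ} : c ∈ addSet μ ↔ IsAddable μ c := by
  simp only [addSet, Finset.mem_filter, Finset.mem_product, Finset.mem_range,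
    and_iff_right_iff_imp]
  intro h
  constructor
  · rcases h.2.1 with h0 | hm
    · omega
    · have := YoungDiagram.mem_iff_lt_colLen.1 (μ.up_left_mem le_rfl (Nat.zero_le _) hm)
      omega
  · rcases h.2.2 with h0 | hm
    · omega
    · have := YoungDiagram.mem_iff_lt_rowLen.1 (μ.up_left_mem (Nat.zero_le _) le_rfl hm)
      omega

lemma bot_mem {μ : YoungDiagram} {c : ℕ × ℕ} (h : c ∈ μ) : (0, 0) ∈ μ :=
  μ.up_left_mem (Nat.zero_le _) (Nat.zero_le _) h

lemma card_pos_iff {μ : YoungDiagram} : 0 < μ.card ↔ μ ≠ ⊥ := by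
  rw [Finset.card_pos]
  constructor
  · rintro ⟨c, hc⟩ rfl
    simp [YoungDiagram.cells_bot] at hc
  · intro h
    by_contra hne
    apply h
    apply yd_ext
    rw [YoungDiagram.cells_bot]
    exact Finset.not_nonempty_iff_eq_empty.1 hne

lemma exists_removable {μ : YoungDiagram} (h : μ ≠ ⊥) : ∃ r, IsRemovable μ r := by
  have hpos : 0 < μ.card := card_pos_iff.2 h
  obtain ⟨c, hc⟩ := Finset.card_pos.1 hpos
  have h00 : (0, 0) ∈ μ := bot_mem (μ.mem_cells c |>.1 hc)
  have hcol : 0 < μ.colLen 0 := YoungDiagram.mem_iff_lt_colLen.1 h00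
  set i0 := μ.colLen 0 - 1 with hi0
  have hrow : 0 < μ.rowLen i0 := by
    rw [← YoungDiagram.mem_iff_lt_rowLen]
    rw [YoungDiagram.mem_iff_lt_colLen]
    omega
  set j0 := μ.rowLen i0 - 1 with hj0
  refine ⟨(i0, j0), ?_, ?_, ?_⟩
  · rw [YoungDiagram.mem_iff_lt_rowLen]; omega
  · dsimp only
    intro hm
    have := YoungDiagram.mem_iff_lt_colLen.1 (μ.up_left_mem le_rfl (Nat.zero_le _) hm)
    omega
  · dsimp only
    rw [YoungDiagram.mem_iff_lt_rowLen]
    omega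


section helper
variable {f : ℕ × ℕ → ℤ} {s : Finset (ℕ × ℕ)} {b p q : ℕ × ℕ} {P Q : Prop}
  [Decidable P] [Decidable Q]

lemma sum_split (hb : b ∈ s) (hp : P → p ∉ s) (hq : Q → q ∉ s)
    (hpq : P → Q → p ≠ q) :
    ∑ x ∈ ((s.erase b) ∪ ((if P then {p} else ∅) ∪ (if Q then {q} else ∅))), f x
      = ∑ x ∈ s, f x - f b + (if P then f p else 0) + (if Q then f q else 0) := by
  have hd2 : Disjoint (if P then ({p} : Finset (ℕ × ℕ)) else ∅)
      (if Q then ({q} : Finset (ℕ × ℕ)) else ∅) := by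
    split_ifs with h1 h2
    · simp only [Finset.disjoint_singleton]
      exact hpq h1 h2
    · simp
    · simp
    · simp
  have hd1 : Disjoint (s.erase b)
      ((if P then ({p} : Finset (ℕ × ℕ)) else ∅) ∪ (if Q then {q} else ∅)) := by
    rw [Finset.disjoint_left]
    intro x hx
    have hxs : x ∈ s := Finset.mem_of_mem_erase hx
    simp only [Finset.mem_union, Finset.mem_singleton]
    rintro (hm | hm)
    · split_ifs at hm with h1
      · simp at hm; subst hm; exact hp h1 hxs
      · simp at hm
    · split_ifs at hm with h1
      · simp at hm; subst hm; exact hq h1 hxs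
      · simp at hm
  rw [Finset.sum_union hd1, Finset.sum_union hd2, Finset.sum_erase_eq_sub hb]
  have e1 : ∑ x ∈ (if P then ({p} : Finset (ℕ × ℕ)) else ∅), f x = if P then f p else 0 := by
    split_ifs <;> simp
  have e2 : ∑ x ∈ (if Q then ({q} : Finset (ℕ × ℕ)) else ∅), f x = if Q then f q else 0 := by
    split_ifs <;> simp
  rw [e1, e2]
  ring

end helper
/-- membership-level description of addable cells of `μ + b`. -/
lemma isAddable_addCell_iff {μ : YoungDiagram} {i j : ℕ} (h : IsAddable μ (i, j))
    (x : ℕ × ℕ) :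
    IsAddable (addCell μ (i, j)) x ↔
      (IsAddable μ x ∧ x ≠ (i, j))
      ∨ (x = (i, j + 1) ∧ (i = 0 ∨ (i - 1, j + 1) ∈ μ))
      ∨ (x = (i + 1, j) ∧ (j = 0 ∨ (i + 1, j - 1) ∈ μ)) := by
  obtain ⟨a, c⟩ := x
  have hijμ : (i, j) ∉ μ := h.1
  constructor
  · rintro ⟨hmem, hrow, hcol⟩
    rw [mem_addCell h] at hmem
    push_neg at hmem
    obtain ⟨hne, hnotμ⟩ := hmem
    by_cases hbr : (a, c) = (i, j + 1)
    · refine Or.inr (Or.inl ⟨hbr, ?_⟩)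
      rw [Prod.ext_iff] at hbr; simp only at hbr
      obtain ⟨rfl, rfl⟩ : a = i ∧ c = j + 1 := hbr
      rcases hrow with h0 | hm
      · exact Or.inl h0
      · rw [mem_addCell h] at hm
        rcases hm with he | hm
        · exact absurd (congrArg Prod.snd he) (by simp)
        · exact Or.inr hm
    · by_cases hbd : (a, c) = (i + 1, j)
      · refine Or.inr (Or.inr ⟨hbd, ?_⟩)
        rw [Prod.ext_iff] at hbd; simp only at hbd
        obtain ⟨rfl, rfl⟩ : a = i + 1 ∧ c = j := hbd
        rcases hcol with h0 | hm
        · exact Or.inl h0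
        · rw [mem_addCell h] at hm
          rcases hm with he | hm
          · exact absurd (congrArg Prod.fst he) (by simp)
          · exact Or.inr hm
      · -- generic case
        refine Or.inl ⟨⟨hnotμ, ?_, ?_⟩, hne⟩
        · rcases hrow with h0 | hm
          · exact Or.inl h0
          · rw [mem_addCell h] at hm
            rcases hm with he | hm
            · exfalso
              rw [Prod.ext_iff] at he; simp only at he
              rcases Nat.eq_zero_or_pos a with ha0 | ha0
              · exact hne (by rw [Prod.ext_iff]; simp only; omega)
              · exact hbd (by rw [Prod.ext_iff]; simp only; omega)
            · exact Or.inr hm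
        · rcases hcol with h0 | hm
          · exact Or.inl h0
          · rw [mem_addCell h] at hm
            rcases hm with he | hm
            · exfalso
              rw [Prod.ext_iff] at he; simp only at he
              rcases Nat.eq_zero_or_pos c with hc0 | hc0
              · exact hne (by rw [Prod.ext_iff]; simp only; omega)
              · exact hbr (by rw [Prod.ext_iff]; simp only; omega)
            · exact Or.inr hm
  · rintro (⟨ha, hne⟩ | ⟨he, hcond⟩ | ⟨he, hcond⟩)
    · refine ⟨?_, ?_, ?_⟩
      · rw [mem_addCell h]
        rintro (he | hm)
        · exact hne he
        · exact ha.1 hm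
      · rcases ha.2.1 with h0 | hm
        · exact Or.inl h0
        · exact Or.inr ((mem_addCell h).2 (Or.inr hm))
      · rcases ha.2.2 with h0 | hm
        · exact Or.inl h0
        · exact Or.inr ((mem_addCell h).2 (Or.inr hm))
    · rw [Prod.ext_iff] at he; simp only at he
      obtain ⟨rfl, rfl⟩ : a = i ∧ c = j + 1 := he
      refine ⟨?_, ?_, ?_⟩
      · rw [mem_addCell h]
        rintro (he2 | hm)
        · exact absurd (congrArg Prod.snd he2) (by simp)
        · exact hijμ (μ.up_left_mem le_rfl (by omega) hm)
      · rcases hcond with h0 | hm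
        · exact Or.inl h0
        · exact Or.inr ((mem_addCell h).2 (Or.inr hm))
      · refine Or.inr ((mem_addCell h).2 (Or.inl ?_))
        rw [Prod.ext_iff]; simp
    · rw [Prod.ext_iff] at he; simp only at he
      obtain ⟨rfl, rfl⟩ : a = i + 1 ∧ c = j := he
      refine ⟨?_, ?_, ?_⟩
      · rw [mem_addCell h]
        rintro (he2 | hm)
        · exact absurd (congrArg Prod.fst he2) (by simp)
        · exact hijμ (μ.up_left_mem (by omega) le_rfl hm)
      · refine Or.inr ((mem_addCell h).2 (Or.inl ?_))
        rw [Prod.ext_iff]; simp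
      · rcases hcond with h0 | hm
        · exact Or.inl h0
        · exact Or.inr ((mem_addCell h).2 (Or.inr hm))

/-- membership-level description of removable cells of `μ` vs those of `μ + b`. -/
lemma isRemovable_iff_addCell {μ : YoungDiagram} {i j : ℕ} (h : IsAddable μ (i, j))
    (x : ℕ × ℕ) :
    IsRemovable μ x ↔
      (IsRemovable (addCell μ (i, j)) x ∧ x ≠ (i, j))
      ∨ (x = (i - 1, j) ∧ 0 < i ∧ (i - 1, j + 1) ∉ μ)
      ∨ (x = (i, j - 1) ∧ 0 < j ∧ (i + 1, j - 1) ∉ μ) := by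
  obtain ⟨a, c⟩ := x
  have hijμ : (i, j) ∉ μ := h.1
  constructor
  · rintro ⟨hmem, hdown, hright⟩
    dsimp only at hdown hright
    have hne : (a, c) ≠ (i, j) := fun he => hijμ (he ▸ hmem)
    by_cases htr : (a, c) = (i - 1, j) ∧ 0 < i
    · exact Or.inr (Or.inl ⟨htr.1, htr.2, by
        obtain ⟨he, hipos⟩ := htr
        rw [Prod.ext_iff] at he; simp only at he
        obtain ⟨rfl, rfl⟩ : a = i - 1 ∧ c = j := he
        exact hright⟩)
    · by_cases htd : (a, c) = (i, j - 1) ∧ 0 < j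
      · exact Or.inr (Or.inr ⟨htd.1, htd.2, by
          obtain ⟨he, hjpos⟩ := htd
          rw [Prod.ext_iff] at he; simp only at he
          obtain ⟨rfl, rfl⟩ : a = i ∧ c = j - 1 := he
          exact hdown⟩)
      · refine Or.inl ⟨⟨(mem_addCell h).2 (Or.inr hmem), ?_, ?_⟩, hne⟩
        · dsimp only
          rw [mem_addCell h]
          rintro (he | hm)
          · rw [Prod.ext_iff] at he; simp only at he
            exact htr ⟨by rw [Prod.ext_iff]; simp only; omega, by omega⟩
          · exact hdown hm
        · dsimp only
          rw [mem_addCell h]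
          rintro (he | hm)
          · rw [Prod.ext_iff] at he; simp only at he
            exact htd ⟨by rw [Prod.ext_iff]; simp only; omega, by omega⟩
          · exact hright hm
  · rintro (⟨⟨hmem, hdown, hright⟩, hne⟩ | ⟨he, hipos, hnm⟩ | ⟨he, hjpos, hnm⟩)
    · dsimp only at hdown hright
      refine ⟨?_, ?_, ?_⟩
      · rcases (mem_addCell h).1 hmem with he | hm
        · exact absurd he hne
        · exact hm
      · exact fun hm => hdown ((mem_addCell h).2 (Or.inr hm))
      · exact fun hm => hright ((mem_addCell h).2 (Or.inr hm))
    · rw [Prod.ext_iff] at he; simp only at he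
      obtain ⟨rfl, rfl⟩ : a = i - 1 ∧ c = j := he
      refine ⟨?_, ?_, ?_⟩
      · rcases h.2.1 with h0 | hm
        · omega
        · exact hm
      · dsimp only
        intro hm
        exact hijμ (by have : (i - 1 + 1, c) = (i, c) := by simp; omega
                       rwa [this] at hm)
      · exact hnm
    · rw [Prod.ext_iff] at he; simp only at he
      obtain ⟨rfl, rfl⟩ : a = i ∧ c = j - 1 := he
      refine ⟨?_, ?_, ?_⟩
      · rcases h.2.2 with h0 | hm
        · omega
        · exact hm
      · exact hnm
      · dsimp only
        intro hm
        exact hijμ (by have : (a, j - 1 + 1) = (a, j) := by simp; omega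
                       rwa [this] at hm)



noncomputable def Aw (w : ℤ → ℤ) (μ : YoungDiagram) : ℤ := ∑ c ∈ addSet μ, w (content c)
noncomputable def Rw (w : ℤ → ℤ) (μ : YoungDiagram) : ℤ := ∑ c ∈ remSet μ, w (content c)

lemma card_bot : (⊥ : YoungDiagram).card = 0 := rfl

lemma addSet_addCell {μ : YoungDiagram} {i j : ℕ} (h : IsAddable μ (i, j)) :
    addSet (addCell μ (i, j)) =
      (((addSet μ).erase (i, j))
        ∪ ((if i = 0 ∨ (i - 1, j + 1) ∈ μ then {(i, j + 1)} else ∅)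
        ∪ (if j = 0 ∨ (i + 1, j - 1) ∈ μ then {(i + 1, j)} else ∅))) := by
  ext x
  simp only [Finset.mem_union, Finset.mem_erase, mem_addSet, Finset.mem_singleton]
  rw [isAddable_addCell_iff h x]
  constructor
  · rintro (⟨ha, hne⟩ | ⟨rfl, hc⟩ | ⟨rfl, hc⟩)
    · exact Or.inl ⟨hne, ha⟩
    · exact Or.inr (Or.inl (by rw [if_pos hc]; simp))
    · exact Or.inr (Or.inr (by rw [if_pos hc]; simp))
  · rintro (⟨hne, ha⟩ | hm | hm)
    · exact Or.inl ⟨ha, hne⟩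
    · split_ifs at hm with h1
      · simp at hm; exact Or.inr (Or.inl ⟨hm, h1⟩)
      · simp at hm
    · split_ifs at hm with h1
      · simp at hm; exact Or.inr (Or.inr ⟨hm, h1⟩)
      · simp at hm

lemma remSet_addCell {μ : YoungDiagram} {i j : ℕ} (h : IsAddable μ (i, j)) :
    remSet μ =
      (((remSet (addCell μ (i, j))).erase (i, j))
        ∪ ((if 0 < i ∧ (i - 1, j + 1) ∉ μ then {(i - 1, j)} else ∅)
        ∪ (if 0 < j ∧ (i + 1, j - 1) ∉ μ then {(i, j - 1)} else ∅))) := by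
  ext x
  simp only [Finset.mem_union, Finset.mem_erase, mem_remSet, Finset.mem_singleton]
  rw [isRemovable_iff_addCell h x]
  constructor
  · rintro (⟨ha, hne⟩ | ⟨rfl, hc1, hc2⟩ | ⟨rfl, hc1, hc2⟩)
    · exact Or.inl ⟨hne, ha⟩
    · exact Or.inr (Or.inl (by rw [if_pos ⟨hc1, hc2⟩]; simp))
    · exact Or.inr (Or.inr (by rw [if_pos ⟨hc1, hc2⟩]; simp))
  · rintro (⟨hne, ha⟩ | hm | hm)
    · exact Or.inl ⟨ha, hne⟩
    · split_ifs at hm with h1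
      · simp at hm; exact Or.inr (Or.inl ⟨hm, h1.1, h1.2⟩)
      · simp at hm
    · split_ifs at hm with h1
      · simp at hm; exact Or.inr (Or.inr ⟨hm, h1.1, h1.2⟩)
      · simp at hm

set_option maxHeartbeats 1000000 in
lemma S_update (w : ℤ → ℤ) {μ : YoungDiagram} {b : ℕ × ℕ} (h : IsAddable μ b) :
    Aw w (addCell μ b) - Rw w (addCell μ b)
      = Aw w μ - Rw w μ + w (content b + 1) + w (content b - 1) - 2 * w (content b) := by
  obtain ⟨i, j⟩ := b
  have hc1 : content (i, j + 1) = content (i, j) + 1 := by unfold content; push_cast; ring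
  have hc2 : content (i + 1, j) = content (i, j) - 1 := by unfold content; push_cast; ring
  have hbr_not : (i, j + 1) ∉ addSet μ := by
    rw [mem_addSet]
    rintro ⟨-, -, (h0 | hm)⟩
    · omega
    · simp only [Nat.add_sub_cancel] at hm
      exact h.1 hm
  have hbd_not : (i + 1, j) ∉ addSet μ := by
    rw [mem_addSet]
    rintro ⟨-, (h0 | hm), -⟩
    · omega
    · simp only [Nat.add_sub_cancel] at hm
      exact h.1 hm
  have hA : Aw w (addCell μ (i, j))
      = Aw w μ - w (content (i, j))
        + (if i = 0 ∨ (i - 1, j + 1) ∈ μ then w (content (i, j) + 1) else 0)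
        + (if j = 0 ∨ (i + 1, j - 1) ∈ μ then w (content (i, j) - 1) else 0) := by
    unfold Aw
    rw [addSet_addCell h,
      sum_split (mem_addSet.2 h) (fun _ => hbr_not) (fun _ => hbd_not)
        (fun _ _ => by simp), hc1, hc2]
  have hR : Rw w μ
      = Rw w (addCell μ (i, j)) - w (content (i, j))
        + (if 0 < i ∧ (i - 1, j + 1) ∉ μ then w (content (i, j) + 1) else 0)
        + (if 0 < j ∧ (i + 1, j - 1) ∉ μ then w (content (i, j) - 1) else 0) := by
    have hmem : (i, j) ∈ remSet (addCell μ (i, j)) := mem_remSet.2 (isRemovable_addCell h)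
    have htr_not : 0 < i ∧ (i - 1, j + 1) ∉ μ → (i - 1, j) ∉ remSet (addCell μ (i, j)) := by
      rintro ⟨hipos, -⟩ hm
      apply (mem_remSet.1 hm).2.1
      have he : (i - 1 + 1, j) = (i, j) := by simp; omega
      rw [he]
      exact (mem_remSet.1 hmem).1
    have htd_not : 0 < j ∧ (i + 1, j - 1) ∉ μ → (i, j - 1) ∉ remSet (addCell μ (i, j)) := by
      rintro ⟨hjpos, -⟩ hm
      apply (mem_remSet.1 hm).2.2
      have he : (i, j - 1 + 1) = (i, j) := by simp; omega
      rw [he]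
      exact (mem_remSet.1 hmem).1
    unfold Rw
    rw [remSet_addCell h,
      sum_split hmem htr_not htd_not
        (fun h1 h2 => by simp only [ne_eq, Prod.mk.injEq, not_and]; intro hei; omega)]
    congr 1
    · congr 1
      by_cases hP : 0 < i ∧ (i - 1, j + 1) ∉ μ
      · rw [if_pos hP, if_pos hP]
        congr 1
        unfold content
        obtain ⟨hipos, -⟩ := hP
        simp only
        push_cast [Nat.cast_sub (by omega : 1 ≤ i)]
        ring
      · rw [if_neg hP, if_neg hP]
    · by_cases hP : 0 < j ∧ (i + 1, j - 1) ∉ μ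
      · rw [if_pos hP, if_pos hP]
        congr 1
        unfold content
        obtain ⟨hjpos, -⟩ := hP
        simp only
        push_cast [Nat.cast_sub (by omega : 1 ≤ j)]
        ring
      · rw [if_neg hP, if_neg hP]
  rw [hA, hR]
  by_cases hcr : i = 0 ∨ (i - 1, j + 1) ∈ μ
  · have hnr : ¬(0 < i ∧ (i - 1, j + 1) ∉ μ) := by
      rintro ⟨hipos, hnm⟩
      rcases hcr with h0 | hm
      · omega
      · exact hnm hm
    by_cases hcd : j = 0 ∨ (i + 1, j - 1) ∈ μ
    · have hnd : ¬(0 < j ∧ (i + 1, j - 1) ∉ μ) := by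
        rintro ⟨hjpos, hnm⟩
        rcases hcd with h0 | hm
        · omega
        · exact hnm hm
      rw [if_pos hcr, if_pos hcd, if_neg hnr, if_neg hnd]
      ring
    · have hnd : 0 < j ∧ (i + 1, j - 1) ∉ μ := by push_neg at hcd; exact ⟨by omega, hcd.2⟩
      rw [if_pos hcr, if_neg hcd, if_neg hnr, if_pos hnd]
      ring
  · have hnr : 0 < i ∧ (i - 1, j + 1) ∉ μ := by push_neg at hcr; exact ⟨by omega, hcr.2⟩
    by_cases hcd : j = 0 ∨ (i + 1, j - 1) ∈ μ
    · have hnd : ¬(0 < j ∧ (i + 1, j - 1) ∉ μ) := by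
        rintro ⟨hjpos, hnm⟩
        rcases hcd with h0 | hm
        · omega
        · exact hnm hm
      rw [if_neg hcr, if_pos hcd, if_pos hnr, if_neg hnd]
      ring
    · have hnd : 0 < j ∧ (i + 1, j - 1) ∉ μ := by push_neg at hcd; exact ⟨by omega, hcd.2⟩
      rw [if_neg hcr, if_neg hcd, if_pos hnr, if_pos hnd]
      ring

lemma addSet_bot : addSet ⊥ = {(0, 0)} := by
  ext ⟨a, c⟩
  rw [mem_addSet]
  simp only [Finset.mem_singleton, Prod.mk.injEq]
  constructor
  · rintro ⟨-, (h1 | hm1), (h2 | hm2)⟩ <;>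
      first
        | exact ⟨h1, h2⟩
        | simp [YoungDiagram.notMem_bot] at *
  · rintro ⟨rfl, rfl⟩
    exact ⟨YoungDiagram.notMem_bot _, Or.inl rfl, Or.inl rfl⟩

lemma remSet_bot : remSet ⊥ = ∅ := by
  ext x
  rw [mem_remSet]
  simp only [Finset.notMem_empty, iff_false]
  rintro ⟨hm, -, -⟩
  exact YoungDiagram.notMem_bot _ hm

lemma yd_eq_bot_card {μ : YoungDiagram} (h : μ.card = 0) : μ = ⊥ := by
  have : μ.cells = ∅ := Finset.card_eq_zero.1 h
  cases μ
  simp only [YoungDiagram.cells] at this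
  subst this
  rfl

lemma S_closed (w : ℤ → ℤ) (μ : YoungDiagram) :
    Aw w μ - Rw w μ
      = w 0 + ∑ u ∈ μ.cells, (w (content u + 1) + w (content u - 1) - 2 * w (content u)) := by
  suffices H : ∀ n (μ : YoungDiagram), μ.card = n →
      Aw w μ - Rw w μ
        = w 0 + ∑ u ∈ μ.cells, (w (content u + 1) + w (content u - 1) - 2 * w (content u)) from
    H μ.card μ rfl
  intro n
  induction n using Nat.strong_induction_on with
  | _ n ih =>
    intro μ hn
    rcases Nat.eq_zero_or_pos n with rfl | hpos
    · have hbot : μ = ⊥ := yd_eq_bot_card hn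
      subst hbot
      unfold Aw Rw
      rw [addSet_bot, remSet_bot]
      simp [YoungDiagram.cells_bot, content]
    · have hne : μ ≠ ⊥ := by
        rintro rfl
        rw [show (⊥ : YoungDiagram).card = 0 from rfl] at hn
        omega
      obtain ⟨r, hr⟩ := exists_removable hne
      have hd := card_delCell hr
      have hadd := isAddable_delCell hr
      have hup := S_update w hadd
      rw [addCell_delCell hr] at hup
      rw [hup, ih (delCell μ r).card (by omega) _ rfl]
      have hcells : μ.cells = insert r (delCell μ r).cells := by
        rw [cells_delCell hr, Finset.insert_erase (by simpa using hr.1)]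
      rw [hcells, Finset.sum_insert (by rw [cells_delCell hr]; simp)]
      ring

lemma S_one (μ : YoungDiagram) : Aw (fun _ => 1) μ - Rw (fun _ => 1) μ = 1 := by
  rw [S_closed]
  simp

lemma S_id (μ : YoungDiagram) : Aw (fun x => x) μ - Rw (fun x => x) μ = 0 := by
  rw [S_closed]
  simp
  rw [← Finset.sum_sub_distrib]
  apply Finset.sum_eq_zero
  intro u _
  ring

lemma S_sq (μ : YoungDiagram) :
    Aw (fun x => x ^ 2) μ - Rw (fun x => x ^ 2) μ = 2 * μ.card := by
  rw [S_closed]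
  have h2 : ∀ u ∈ μ.cells,
      ((content u + 1) ^ 2 + (content u - 1) ^ 2 - 2 * content u ^ 2) = 2 := by
    intro u _
    ring
  rw [Finset.sum_congr rfl h2]
  simp [mul_comm]


def SYT (μ : YoungDiagram) :=
  {T : μ.cells → Fin μ.card //
    Function.Bijective T ∧
    (∀ c d : μ.cells, (c : ℕ × ℕ).1 = (d : ℕ × ℕ).1 → (c : ℕ × ℕ).2 < (d : ℕ × ℕ).2 →
      T c < T d) ∧
    (∀ c d : μ.cells, (c : ℕ × ℕ).2 = (d : ℕ × ℕ).2 → (c : ℕ × ℕ).1 < (d : ℕ × ℕ).1 →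
      T c < T d)}

instance (μ : YoungDiagram) : Fintype (SYT μ) := by
  unfold SYT; infer_instance

def topFin {μ : YoungDiagram} (hpos : 0 < μ.card) : Fin μ.card := ⟨μ.card - 1, by omega⟩

noncomputable def peakCell {μ : YoungDiagram} (hpos : 0 < μ.card) (T : SYT μ) : ℕ × ℕ :=
  ((Equiv.ofBijective T.1 T.2.1).symm (topFin hpos) : {x // x ∈ μ.cells}).1

lemma peak_mem {μ : YoungDiagram} (hpos : 0 < μ.card) (T : SYT μ) :
    peakCell hpos T ∈ μ.cells :=
  ((Equiv.ofBijective T.1 T.2.1).symm (topFin hpos)).2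

lemma peak_apply {μ : YoungDiagram} (hpos : 0 < μ.card) (T : SYT μ) :
    T.1 ⟨peakCell hpos T, peak_mem hpos T⟩ = topFin hpos := by
  have h : (⟨peakCell hpos T, peak_mem hpos T⟩ : {x // x ∈ μ.cells})
      = (Equiv.ofBijective T.1 T.2.1).symm (topFin hpos) := rfl
  rw [h]
  exact (Equiv.ofBijective T.1 T.2.1).apply_symm_apply (topFin hpos)

lemma peak_unique {μ : YoungDiagram} (hpos : 0 < μ.card) (T : SYT μ) {x : ℕ × ℕ}
    (hc : x ∈ μ.cells) (hv : T.1 ⟨x, hc⟩ = topFin hpos) : x = peakCell hpos T := by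
  have := T.2.1.1 (a₁ := ⟨x, hc⟩) (a₂ := ⟨peakCell hpos T, peak_mem hpos T⟩)
    (by rw [hv, peak_apply])
  exact congrArg Subtype.val this

lemma peak_removable {μ : YoungDiagram} (hpos : 0 < μ.card) (T : SYT μ) :
    IsRemovable μ (peakCell hpos T) := by
  set p := peakCell hpos T with hp
  have hmem : p ∈ μ := (μ.mem_cells p).1 (peak_mem hpos T)
  refine ⟨hmem, ?_, ?_⟩
  · intro hm
    have hlt := T.2.2.2 ⟨p, peak_mem hpos T⟩ ⟨(p.1 + 1, p.2), (μ.mem_cells _).2 hm⟩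
      (by simp) (by simp)
    rw [peak_apply] at hlt
    have h1 : (topFin hpos).1 < (T.1 ⟨(p.1 + 1, p.2), (μ.mem_cells _).2 hm⟩).1 := hlt
    have h2 := (T.1 ⟨(p.1 + 1, p.2), (μ.mem_cells _).2 hm⟩).2
    unfold topFin at h1
    simp at h1
    omega
  · intro hm
    have hlt := T.2.2.1 ⟨p, peak_mem hpos T⟩ ⟨(p.1, p.2 + 1), (μ.mem_cells _).2 hm⟩
      (by simp) (by simp)
    rw [peak_apply] at hlt
    have h1 : (topFin hpos).1 < (T.1 ⟨(p.1, p.2 + 1), (μ.mem_cells _).2 hm⟩).1 := hlt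
    have h2 := (T.1 ⟨(p.1, p.2 + 1), (μ.mem_cells _).2 hm⟩).2
    unfold topFin at h1
    simp at h1
    omega

section restrict
variable {μ : YoungDiagram} {r : ℕ × ℕ}

lemma mem_of_del (hrem : IsRemovable μ r) {x : ℕ × ℕ} (hx : x ∈ (delCell μ r).cells) : x ∈ μ.cells := by
  rw [cells_delCell hrem] at hx
  exact Finset.mem_of_mem_erase hx

lemma ne_of_del (hrem : IsRemovable μ r) {x : ℕ × ℕ} (hx : x ∈ (delCell μ r).cells) : x ≠ r := by
  rw [cells_delCell hrem] at hx
  exact Finset.ne_of_mem_erase hx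

lemma mem_del_of (hrem : IsRemovable μ r) {x : ℕ × ℕ} (hx : x ∈ μ.cells) (hne : x ≠ r) : x ∈ (delCell μ r).cells := by
  rw [cells_delCell hrem]
  exact Finset.mem_erase.2 ⟨hne, hx⟩

/-- restriction of a SYT of shape `μ` with peak at `r` to `μ - r`. -/
noncomputable def restrict (hrem : IsRemovable μ r) (hpos : 0 < μ.card) (T : SYT μ) (hT : peakCell hpos T = r) : SYT (delCell μ r) := by
  have hcard : (delCell μ r).card + 1 = μ.card := card_delCell hrem
  refine ⟨fun x => ⟨(T.1 ⟨x.1, mem_of_del hrem x.2⟩).1, ?_⟩, ?_, ?_, ?_⟩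
  · -- value bound
    have hlt := (T.1 ⟨x.1, mem_of_del hrem x.2⟩).2
    have hne : (T.1 ⟨x.1, mem_of_del hrem x.2⟩).1 ≠ μ.card - 1 := by
      intro he
      have : T.1 ⟨x.1, mem_of_del hrem x.2⟩ = topFin hpos := by
        unfold topFin; exact Fin.ext he
      exact ne_of_del hrem x.2 (by rw [peak_unique hpos T (mem_of_del hrem x.2) this, hT])
    omega
  · -- bijective
    rw [Fintype.bijective_iff_injective_and_card]
    constructor
    · intro x y hxy
      simp only [Fin.mk.injEq] at hxy
      have := T.2.1.1 (a₁ := ⟨x.1, mem_of_del hrem x.2⟩) (a₂ := ⟨y.1, mem_of_del hrem y.2⟩)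
        (Fin.ext hxy)
      simp only [Subtype.mk.injEq] at this
      exact Subtype.ext this
    · simp [Fintype.card_coe]
  · intro c d h1 h2
    exact T.2.2.1 ⟨c.1, mem_of_del hrem c.2⟩ ⟨d.1, mem_of_del hrem d.2⟩ h1 h2
  · intro c d h1 h2
    exact T.2.2.2 ⟨c.1, mem_of_del hrem c.2⟩ ⟨d.1, mem_of_del hrem d.2⟩ h1 h2

/-- extension of a SYT of shape `μ - r` to one of shape `μ` by putting the top value at `r`. -/
noncomputable def extend (hrem : IsRemovable μ r) (hpos : 0 < μ.card)
    (T : SYT (delCell μ r)) : SYT μ := by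
  have hcard : (delCell μ r).card + 1 = μ.card := card_delCell hrem
  refine ⟨fun x => if hx : x.1 = r then topFin hpos
    else ⟨(T.1 ⟨x.1, mem_del_of hrem x.2 hx⟩).1, by
      have := (T.1 ⟨x.1, mem_del_of hrem x.2 hx⟩).2; omega⟩, ?_, ?_, ?_⟩
  · -- bijective
    rw [Fintype.bijective_iff_injective_and_card]
    refine ⟨?_, by simp [Fintype.card_coe]⟩
    intro x y hxy
    dsimp only at hxy
    by_cases hx : x.1 = r <;> by_cases hy : y.1 = r
    · exact Subtype.ext (hx.trans hy.symm)
    · rw [dif_pos hx, dif_neg hy] at hxy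
      have h2 := (T.1 ⟨y.1, mem_del_of hrem y.2 hy⟩).2
      have := congrArg Fin.val hxy
      unfold topFin at this
      simp at this
      omega
    · rw [dif_neg hx, dif_pos hy] at hxy
      have h2 := (T.1 ⟨x.1, mem_del_of hrem x.2 hx⟩).2
      have := congrArg Fin.val hxy
      unfold topFin at this
      simp at this
      omega
    · rw [dif_neg hx, dif_neg hy] at hxy
      have hvv := congrArg Fin.val hxy
      simp only at hvv
      have h3 := T.2.1.1 (a₁ := ⟨x.1, mem_del_of hrem x.2 hx⟩)
        (a₂ := ⟨y.1, mem_del_of hrem y.2 hy⟩) (Fin.ext hvv)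
      simp only [Subtype.mk.injEq] at h3
      exact Subtype.ext h3
  · -- rows
    intro c d h1 h2
    have hc : c.1 ≠ r := by
      intro hc
      by_cases hd : d.1 = r
      · rw [hc] at h1 h2
        rw [← hd] at h1 h2
        omega
      · apply hrem.2.2
        apply μ.up_left_mem (i2 := (d.1).1) (j2 := (d.1).2) ?_ ?_ ((μ.mem_cells _).1 d.2)
        · rw [← h1, hc]
        · rw [← hc]
          omega
    by_cases hd : d.1 = r
    · rw [show (fun x : {x // x ∈ μ.cells} => if hx : x.1 = r then topFin hpos
        else _) = _ from rfl]
      show (dite _ _ _ : Fin μ.card) < dite _ _ _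
      rw [dif_pos hd, dif_neg hc, Fin.lt_def]
      have h2' := (T.1 ⟨c.1, mem_del_of hrem c.2 hc⟩).2
      show _ < (topFin hpos).1
      unfold topFin
      simp only
      omega
    · show (dite _ _ _ : Fin μ.card) < dite _ _ _
      rw [dif_neg hd, dif_neg hc, Fin.lt_def]
      exact T.2.2.1 ⟨c.1, mem_del_of hrem c.2 hc⟩ ⟨d.1, mem_del_of hrem d.2 hd⟩ h1 h2
  · -- cols
    intro c d h1 h2
    have hc : c.1 ≠ r := by
      intro hc
      by_cases hd : d.1 = r
      · rw [hc] at h1 h2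
        rw [← hd] at h1 h2
        omega
      · apply hrem.2.1
        apply μ.up_left_mem (i2 := (d.1).1) (j2 := (d.1).2) ?_ ?_ ((μ.mem_cells _).1 d.2)
        · rw [← hc]
          omega
        · rw [← h1, hc]
    by_cases hd : d.1 = r
    · show (dite _ _ _ : Fin μ.card) < dite _ _ _
      rw [dif_pos hd, dif_neg hc, Fin.lt_def]
      have h2' := (T.1 ⟨c.1, mem_del_of hrem c.2 hc⟩).2
      show _ < (topFin hpos).1
      unfold topFin
      simp only
      omega
    · show (dite _ _ _ : Fin μ.card) < dite _ _ _
      rw [dif_neg hd, dif_neg hc, Fin.lt_def]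
      exact T.2.2.2 ⟨c.1, mem_del_of hrem c.2 hc⟩ ⟨d.1, mem_del_of hrem d.2 hd⟩ h1 h2

lemma peak_extend (hrem : IsRemovable μ r) (hpos : 0 < μ.card) (T : SYT (delCell μ r)) : peakCell hpos (extend hrem hpos T) = r := by
  have hr : r ∈ μ.cells := (μ.mem_cells r).2 hrem.1
  refine (peak_unique hpos (extend hrem hpos T) hr ?_).symm
  show (if hx : r = r then _ else _) = topFin hpos
  rw [dif_pos rfl]

lemma restrict_extend (hrem : IsRemovable μ r) (hpos : 0 < μ.card) (T : SYT (delCell μ r)) (hT : peakCell hpos (extend hrem hpos T) = r) :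
    restrict hrem hpos (extend hrem hpos T) hT = T := by
  apply Subtype.ext
  funext x
  apply Fin.ext
  show ((extend hrem hpos T).1 ⟨x.1, _⟩).1 = _
  have hne : x.1 ≠ r := ne_of_del hrem x.2
  show (if hx : x.1 = r then topFin hpos else _).1 = _
  rw [dif_neg hne]

lemma extend_restrict (hrem : IsRemovable μ r) (hpos : 0 < μ.card) (T : SYT μ) (hT : peakCell hpos T = r) :
    extend hrem hpos (restrict hrem hpos T hT) = T := by
  apply Subtype.ext
  funext x
  show (if hx : x.1 = r then topFin hpos else _) = T.1 x
  by_cases hx : x.1 = r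
  · rw [dif_pos hx]
    have hxe : x = ⟨peakCell hpos T, peak_mem hpos T⟩ := Subtype.ext (hx.trans hT.symm)
    rw [hxe, peak_apply]
  · rw [dif_neg hx]
    apply Fin.ext
    rfl

end restrict

theorem branching_card {μ : YoungDiagram} (hne : μ ≠ ⊥) :
    Fintype.card (SYT μ) = ∑ r ∈ remSet μ, Fintype.card (SYT (delCell μ r)) := by
  classical
  have hpos : 0 < μ.card := card_pos_iff.2 hne
  rw [← Finset.card_univ,
    Finset.card_eq_sum_card_fiberwise
      (f := peakCell hpos) (t := remSet μ)
      (fun T _ => mem_remSet.2 (peak_removable hpos T))]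
  apply Finset.sum_congr rfl
  intro r hr
  have hrem : IsRemovable μ r := mem_remSet.1 hr
  rw [← Finset.card_univ]
  apply Finset.card_bij'
    (i := fun T hT => restrict hrem hpos T (Finset.mem_filter.1 hT).2)
    (j := fun T _ => extend hrem hpos T)
    (hi := fun a ha => Finset.mem_univ _)
    (hj := fun a ha => Finset.mem_filter.2 ⟨Finset.mem_univ _, peak_extend hrem hpos a⟩)
    (left_inv := fun a ha => extend_restrict hrem hpos a (Finset.mem_filter.1 ha).2)
    (right_inv := fun a ha => restrict_extend hrem hpos a _)



/-- The number `f_λ` of standard Young tableaux of shape `μ`: fillings of the cells with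
distinct numbers `0, …, n-1` increasing along each row and column. -/
noncomputable def sytCount (μ : YoungDiagram) : ℕ :=
  Nat.card {T : μ.cells → Fin μ.card //
    Function.Bijective T ∧
    (∀ c d : μ.cells, (c : ℕ × ℕ).1 = (d : ℕ × ℕ).1 → (c : ℕ × ℕ).2 < (d : ℕ × ℕ).2 →
      T c < T d) ∧
    (∀ c d : μ.cells, (c : ℕ × ℕ).2 = (d : ℕ × ℕ).2 → (c : ℕ × ℕ).1 < (d : ℕ × ℕ).1 →
      T c < T d)}

lemma sytCount_eq (μ : YoungDiagram) : sytCount μ = Fintype.card (SYT μ) := by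
  rw [show sytCount μ = Nat.card (SYT μ) from rfl, Nat.card_eq_fintype_card]

noncomputable def F (μ : YoungDiagram) : ℤ := (sytCount μ : ℤ)

lemma F_bot : F ⊥ = 1 := by
  unfold F
  rw [sytCount_eq]
  norm_cast

lemma branchingF {μ : YoungDiagram} (h : μ ≠ ⊥) :
    F μ = ∑ r ∈ remSet μ, F (delCell μ r) := by
  unfold F
  rw [sytCount_eq, branching_card h]
  push_cast [sytCount_eq]
  rfl

noncomputable def G (w : ℤ → ℤ) (μ : YoungDiagram) : ℤ :=
  ∑ b ∈ addSet μ, w (content b) * F (addCell μ b)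

lemma G_rec (w : ℤ → ℤ) (μ : YoungDiagram) :
    G w μ = (Aw w μ - Rw w μ) * F μ + ∑ r ∈ remSet μ, G w (delCell μ r) := by
  have hstep : ∀ b ∈ addSet μ,
      w (content b) * F (addCell μ b)
        = w (content b) * F μ
          + ∑ r ∈ (remSet (addCell μ b)).erase b,
              w (content b) * F (delCell (addCell μ b) r) := by
    intro b hb
    have hadd : IsAddable μ b := mem_addSet.1 hb
    have hne : addCell μ b ≠ ⊥ :=
      card_pos_iff.1 (by rw [card_addCell hadd]; omega)
    rw [branchingF hne, Finset.mul_sum,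
      ← Finset.add_sum_erase _ _ (mem_remSet.2 (isRemovable_addCell hadd)),
      delCell_addCell hadd]
  have key : ∑ b ∈ addSet μ, ∑ r ∈ (remSet (addCell μ b)).erase b,
        w (content b) * F (delCell (addCell μ b) r)
      = ∑ r ∈ remSet μ, (G w (delCell μ r) - w (content r) * F μ) := by
    calc ∑ b ∈ addSet μ, ∑ r ∈ (remSet (addCell μ b)).erase b,
          w (content b) * F (delCell (addCell μ b) r)
        = ∑ p ∈ (addSet μ).sigma (fun b => (remSet (addCell μ b)).erase b),
            w (content p.1) * F (delCell (addCell μ p.1) p.2) := by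
          rw [Finset.sum_sigma']
      _ = ∑ p ∈ (remSet μ).sigma (fun r => (addSet (delCell μ r)).erase r),
            w (content p.2) * F (addCell (delCell μ p.1) p.2) := by
          apply Finset.sum_nbij' (i := fun p => ⟨p.2, p.1⟩) (j := fun p => ⟨p.2, p.1⟩)
          · rintro ⟨b, r⟩ hp
            rw [Finset.mem_sigma] at hp
            obtain ⟨hb, hr⟩ := hp
            rw [Finset.mem_erase] at hr
            obtain ⟨hne, hr⟩ := hr
            have h2 := (swap_mem (Ne.symm hne)).1 ⟨mem_addSet.1 hb, mem_remSet.1 hr⟩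
            rw [Finset.mem_sigma, Finset.mem_erase]
            exact ⟨mem_remSet.2 h2.1, Ne.symm hne, mem_addSet.2 h2.2⟩
          · rintro ⟨r, b⟩ hp
            rw [Finset.mem_sigma] at hp
            obtain ⟨hr, hb⟩ := hp
            rw [Finset.mem_erase] at hb
            obtain ⟨hne, hb⟩ := hb
            have h2 := (swap_mem hne).2 ⟨mem_remSet.1 hr, mem_addSet.1 hb⟩
            rw [Finset.mem_sigma, Finset.mem_erase]
            exact ⟨mem_addSet.2 h2.1, Ne.symm hne, mem_remSet.2 h2.2⟩
          · rintro ⟨b, r⟩ _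
            rfl
          · rintro ⟨r, b⟩ _
            rfl
          · rintro ⟨b, r⟩ hp
            rw [Finset.mem_sigma] at hp
            obtain ⟨hb, hr⟩ := hp
            rw [Finset.mem_erase] at hr
            obtain ⟨hne, hr⟩ := hr
            simp only
            rw [swap_eq (Ne.symm hne) (mem_addSet.1 hb) (mem_remSet.1 hr)]
      _ = ∑ r ∈ remSet μ, ∑ b ∈ (addSet (delCell μ r)).erase r,
            w (content b) * F (addCell (delCell μ r) b) := by
          rw [Finset.sum_sigma]
      _ = ∑ r ∈ remSet μ, (G w (delCell μ r) - w (content r) * F μ) := by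
          apply Finset.sum_congr rfl
          intro r hr
          have hrem : IsRemovable μ r := mem_remSet.1 hr
          have hradd : r ∈ addSet (delCell μ r) := mem_addSet.2 (isAddable_delCell hrem)
          rw [Finset.sum_erase_eq_sub hradd, addCell_delCell hrem]
          rfl
  have hG : G w μ = ∑ b ∈ addSet μ, w (content b) * F (addCell μ b) := rfl
  rw [hG, Finset.sum_congr rfl hstep, Finset.sum_add_distrib, ← Finset.sum_mul, key,
    Finset.sum_sub_distrib, ← Finset.sum_mul]
  unfold Aw Rw
  ring

lemma G_one (μ : YoungDiagram) : G (fun _ => 1) μ = (μ.card + 1) * F μ := by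
  suffices H : ∀ n (μ : YoungDiagram), μ.card = n → G (fun _ => 1) μ = (μ.card + 1) * F μ from
    H μ.card μ rfl
  intro n
  induction n using Nat.strong_induction_on with
  | _ n ih =>
    intro μ hn
    rw [G_rec, S_one]
    rcases Nat.eq_zero_or_pos n with rfl | hpos
    · rw [yd_eq_bot_card hn] at *
      rw [remSet_bot, card_bot]
      simp
    · have hbr := branchingF (μ := μ) (card_pos_iff.1 (by omega))
      have hsum : ∀ r ∈ remSet μ, G (fun _ => 1) (delCell μ r)
          = (μ.card : ℤ) * F (delCell μ r) := by
        intro r hr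
        have hrem := mem_remSet.1 hr
        have hc := card_delCell hrem
        rw [ih (delCell μ r).card (by omega) _ rfl]
        congr 1
        push_cast
        omega
      rw [Finset.sum_congr rfl hsum, ← Finset.mul_sum, ← hbr]
      push_cast
      ring

lemma G_id (μ : YoungDiagram) : G (fun x => x) μ = 0 := by
  suffices H : ∀ n (μ : YoungDiagram), μ.card = n → G (fun x => x) μ = 0 from
    H μ.card μ rfl
  intro n
  induction n using Nat.strong_induction_on with
  | _ n ih =>
    intro μ hn
    rw [G_rec, S_id]
    have hsum : ∀ r ∈ remSet μ, G (fun x => x) (delCell μ r) = 0 := by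
      intro r hr
      have hc := card_delCell (mem_remSet.1 hr)
      exact ih (delCell μ r).card (by omega) _ rfl
    rw [Finset.sum_congr rfl hsum]
    simp

lemma G_sq (μ : YoungDiagram) :
    G (fun x => x ^ 2) μ = (μ.card : ℤ) * (μ.card + 1) * F μ := by
  suffices H : ∀ n (μ : YoungDiagram), μ.card = n →
      G (fun x => x ^ 2) μ = (μ.card : ℤ) * (μ.card + 1) * F μ from H μ.card μ rfl
  intro n
  induction n using Nat.strong_induction_on with
  | _ n ih =>
    intro μ hn
    rw [G_rec, S_sq]
    rcases Nat.eq_zero_or_pos n with rfl | hpos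
    · rw [yd_eq_bot_card hn] at *
      rw [remSet_bot, card_bot]
      simp
    · have hbr := branchingF (μ := μ) (card_pos_iff.1 (by omega))
      have hsum : ∀ r ∈ remSet μ, G (fun x => x ^ 2) (delCell μ r)
          = ((μ.card : ℤ) - 1) * (μ.card : ℤ) * F (delCell μ r) := by
        intro r hr
        have hrem := mem_remSet.1 hr
        have hc := card_delCell hrem
        rw [ih (delCell μ r).card (by omega) _ rfl]
        have : ((delCell μ r).card : ℤ) = (μ.card : ℤ) - 1 := by push_cast; omega
        rw [this]
        ring
      rw [Finset.sum_congr rfl hsum, ← Finset.mul_sum, ← hbr]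
      ring


/-! ### cell bound and finiteness -/

lemma cell_lt_card {μ : YoungDiagram} {c : ℕ × ℕ} (h : c ∈ μ.cells) :
    c.1 < μ.card ∧ c.2 < μ.card := by
  have h1 : c.1 < μ.colLen c.2 := YoungDiagram.mem_iff_lt_colLen.1 ((μ.mem_cells c).1 (by
    simpa using h))
  have h2 : c.2 < μ.rowLen c.1 := YoungDiagram.mem_iff_lt_rowLen.1 ((μ.mem_cells c).1 (by
    simpa using h))
  have hc1 : μ.colLen c.2 ≤ μ.card := by
    rw [YoungDiagram.colLen_eq_card]
    apply Finset.card_le_card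
    intro x hx
    rw [YoungDiagram.mem_col_iff] at hx
    exact (μ.mem_cells x).2 hx.1
  have hr1 : μ.rowLen c.1 ≤ μ.card := by
    rw [YoungDiagram.rowLen_eq_card]
    apply Finset.card_le_card
    intro x hx
    rw [YoungDiagram.mem_row_iff] at hx
    exact (μ.mem_cells x).2 hx.1
  omega

noncomputable instance fintypeParts (n : ℕ) : Fintype {μ : YoungDiagram // μ.card = n} := by
  apply Fintype.ofInjective
    (f := fun μ : {μ : YoungDiagram // μ.card = n} =>
      (⟨μ.1.cells, by
        rw [Finset.mem_powerset]
        intro c hc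
        have := cell_lt_card hc
        rw [μ.2] at this
        rw [Finset.mem_product, Finset.mem_range, Finset.mem_range]
        exact this⟩ : {s : Finset (ℕ × ℕ) // s ∈ (Finset.range n ×ˢ Finset.range n).powerset}))
  intro a b hab
  exact Subtype.ext (yd_ext (congrArg Subtype.val hab))

noncomputable def parts (n : ℕ) : Finset YoungDiagram :=
  Finset.univ.map ⟨(Subtype.val : {μ : YoungDiagram // μ.card = n} → YoungDiagram),
    Subtype.val_injective⟩

lemma mem_parts {n : ℕ} {μ : YoungDiagram} : μ ∈ parts n ↔ μ.card = n := by
  simp [parts]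

lemma parts_zero : parts 0 = {⊥} := by
  ext μ
  rw [mem_parts, Finset.mem_singleton]
  constructor
  · exact yd_eq_bot_card
  · rintro rfl
    rfl

/-! ### global double counting -/

lemma global_swap (n : ℕ) (φ : YoungDiagram → ℕ × ℕ → ℤ) :
    ∑ lam ∈ parts (n + 1), ∑ r ∈ remSet lam, φ (delCell lam r) r
      = ∑ mu ∈ parts n, ∑ b ∈ addSet mu, φ mu b := by
  rw [Finset.sum_sigma', Finset.sum_sigma']
  apply Finset.sum_nbij' (i := fun p => ⟨delCell p.1 p.2, p.2⟩)
    (j := fun p => ⟨addCell p.1 p.2, p.2⟩)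
  · rintro ⟨lam, r⟩ hp
    rw [Finset.mem_sigma] at hp
    obtain ⟨hlam, hr⟩ := hp
    dsimp only at hlam hr
    have hrem := mem_remSet.1 hr
    rw [Finset.mem_sigma]
    dsimp only
    constructor
    · rw [mem_parts]
      have := card_delCell hrem
      rw [mem_parts.1 hlam] at this
      omega
    · exact mem_addSet.2 (isAddable_delCell hrem)
  · rintro ⟨mu, b⟩ hp
    rw [Finset.mem_sigma] at hp
    obtain ⟨hmu, hb⟩ := hp
    dsimp only at hmu hb
    have hadd := mem_addSet.1 hb
    rw [Finset.mem_sigma]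
    dsimp only
    constructor
    · rw [mem_parts, card_addCell hadd, mem_parts.1 hmu]
    · exact mem_remSet.2 (isRemovable_addCell hadd)
  · rintro ⟨lam, r⟩ hp
    rw [Finset.mem_sigma] at hp
    exact Sigma.ext (addCell_delCell (mem_remSet.1 hp.2)) (heq_of_eq rfl)
  · rintro ⟨mu, b⟩ hp
    rw [Finset.mem_sigma] at hp
    exact Sigma.ext (delCell_addCell (mem_addSet.1 hp.2)) (heq_of_eq rfl)
  · rintro ⟨lam, r⟩ _
    rfl

/-! ### the moments -/

noncomputable def contentSum (μ : YoungDiagram) : ℤ := ∑ c ∈ μ.cells, content c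

lemma contentSum_addCell {μ : YoungDiagram} {b : ℕ × ℕ} (h : IsAddable μ b) :
    contentSum (addCell μ b) = contentSum μ + content b := by
  unfold contentSum
  rw [cells_addCell h, Finset.sum_insert (by simpa using h.1)]
  ring

noncomputable def Nn (n : ℕ) : ℤ := ∑ mu ∈ parts n, F mu ^ 2
noncomputable def Hn (n : ℕ) : ℤ := ∑ mu ∈ parts n, F mu ^ 2 * contentSum mu ^ 2

lemma sum_G_one (mu : YoungDiagram) :
    ∑ b ∈ addSet mu, F (addCell mu b) = (mu.card + 1) * F mu := by
  rw [← G_one]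
  unfold G
  apply Finset.sum_congr rfl
  intro b _
  rw [one_mul]

lemma sum_G_id (mu : YoungDiagram) :
    ∑ b ∈ addSet mu, content b * F (addCell mu b) = 0 := G_id mu

lemma sum_G_sq (mu : YoungDiagram) :
    ∑ b ∈ addSet mu, content b ^ 2 * F (addCell mu b)
      = (mu.card : ℤ) * (mu.card + 1) * F mu := G_sq mu

lemma Nn_succ (n : ℕ) : Nn (n + 1) = (n + 1) * Nn n := by
  unfold Nn
  have h1 : ∀ lam ∈ parts (n + 1),
      F lam ^ 2 = ∑ r ∈ remSet lam,
        (fun mu b => F (addCell mu b) * F mu) (delCell lam r) r := by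
    intro lam hlam
    have hne : lam ≠ ⊥ := card_pos_iff.1 (by rw [mem_parts.1 hlam]; omega)
    calc F lam ^ 2 = ∑ r ∈ remSet lam, F (delCell lam r) * F lam := by
          rw [← Finset.sum_mul, ← branchingF hne]
          ring
      _ = _ := by
          apply Finset.sum_congr rfl
          intro r hr
          simp only
          rw [addCell_delCell (mem_remSet.1 hr)]
          ring
  rw [Finset.sum_congr rfl h1, global_swap n (fun mu b => F (addCell mu b) * F mu)]
  have h3 : ∀ mu ∈ parts n,
      ∑ b ∈ addSet mu, F (addCell mu b) * F mu = (n + 1) * F mu ^ 2 := by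
    intro mu hmu
    rw [← Finset.sum_mul, sum_G_one, mem_parts.1 hmu]
    ring
  rw [Finset.sum_congr rfl h3, ← Finset.mul_sum]

lemma Hn_succ (n : ℕ) : Hn (n + 1) = (n + 1) * Hn n + n * (n + 1) * Nn n := by
  unfold Hn Nn
  have h1 : ∀ lam ∈ parts (n + 1),
      F lam ^ 2 * contentSum lam ^ 2
        = ∑ r ∈ remSet lam, (fun mu b =>
            F (addCell mu b) * F mu * contentSum (addCell mu b) ^ 2) (delCell lam r) r := by
    intro lam hlam
    have hne : lam ≠ ⊥ := card_pos_iff.1 (by rw [mem_parts.1 hlam]; omega)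
    calc F lam ^ 2 * contentSum lam ^ 2
        = ∑ r ∈ remSet lam, F (delCell lam r) * (F lam * contentSum lam ^ 2) := by
          rw [← Finset.sum_mul, ← branchingF hne]
          ring
      _ = _ := by
          apply Finset.sum_congr rfl
          intro r hr
          simp only
          rw [addCell_delCell (mem_remSet.1 hr)]
          ring
  rw [Finset.sum_congr rfl h1,
    global_swap n (fun mu b => F (addCell mu b) * F mu * contentSum (addCell mu b) ^ 2)]
  have h3 : ∀ mu ∈ parts n,
      ∑ b ∈ addSet mu, F (addCell mu b) * F mu * contentSum (addCell mu b) ^ 2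
        = (n + 1) * (F mu ^ 2 * contentSum mu ^ 2) + n * (n + 1) * F mu ^ 2 := by
    intro mu hmu
    have hcard := mem_parts.1 hmu
    have hexp : ∀ b ∈ addSet mu,
        F (addCell mu b) * F mu * contentSum (addCell mu b) ^ 2
          = (contentSum mu ^ 2 * F mu) * F (addCell mu b)
            + (2 * contentSum mu * F mu) * (content b * F (addCell mu b))
            + F mu * (content b ^ 2 * F (addCell mu b)) := by
      intro b hb
      rw [contentSum_addCell (mem_addSet.1 hb)]
      ring
    calc ∑ b ∈ addSet mu, F (addCell mu b) * F mu * contentSum (addCell mu b) ^ 2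
        = ∑ b ∈ addSet mu,
            ((contentSum mu ^ 2 * F mu) * F (addCell mu b)
              + (2 * contentSum mu * F mu) * (content b * F (addCell mu b))
              + F mu * (content b ^ 2 * F (addCell mu b))) :=
          Finset.sum_congr rfl hexp
      _ = (contentSum mu ^ 2 * F mu) * (∑ b ∈ addSet mu, F (addCell mu b))
            + (2 * contentSum mu * F mu)
                * (∑ b ∈ addSet mu, content b * F (addCell mu b))
            + F mu * (∑ b ∈ addSet mu, content b ^ 2 * F (addCell mu b)) := by
          rw [Finset.sum_add_distrib, Finset.sum_add_distrib, Finset.mul_sum,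
            Finset.mul_sum, Finset.mul_sum]
      _ = (n + 1) * (F mu ^ 2 * contentSum mu ^ 2) + n * (n + 1) * F mu ^ 2 := by
          rw [sum_G_one, sum_G_id, sum_G_sq, hcard]
          ring
  rw [Finset.sum_congr rfl h3, Finset.sum_add_distrib, ← Finset.mul_sum, ← Finset.mul_sum]

lemma Nn_eq (n : ℕ) : Nn n = (n.factorial : ℤ) := by
  induction n with
  | zero =>
    unfold Nn
    rw [parts_zero]
    simp [F_bot, Nat.factorial]
  | succ n ih =>
    rw [Nn_succ, ih, Nat.factorial_succ]
    push_cast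
    ring

lemma contentSum_bot : contentSum ⊥ = 0 := by
  unfold contentSum
  simp [YoungDiagram.cells_bot]

lemma Hn_eq (n : ℕ) : 2 * Hn n = (n.factorial : ℤ) * n * (n - 1) := by
  induction n with
  | zero =>
    unfold Hn
    rw [parts_zero]
    simp [contentSum_bot]
  | succ n ih =>
    rw [Hn_succ, Nn_eq, Nat.factorial_succ]
    push_cast
    push_cast at ih
    nlinarith [ih]


/-- The Plancherel average `(1/n!) ∑_{λ ⊢ n} f_λ² φ(λ)`. -/
noncomputable def planchAvg (n : ℕ) (φ : YoungDiagram → ℝ) : ℝ :=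
  (∑' μ : {μ : YoungDiagram // μ.card = n}, (sytCount μ.1 : ℝ) ^ 2 * φ μ.1) / n.factorial

/-- The Plancherel average of `(∑_{u∈λ} c_u)²` over partitions of `n` is `n(n-1)/2`. -/
theorem stmt2 (n : ℕ) :
    planchAvg n (fun μ => (((∑ c ∈ μ.cells, content c : ℤ) : ℝ)) ^ 2)
      = (n : ℝ) * ((n : ℝ) - 1) / 2 := by
  unfold planchAvg
  have key : (∑' μ : {μ : YoungDiagram // μ.card = n},
      (sytCount μ.1 : ℝ) ^ 2 * (((∑ c ∈ μ.1.cells, content c : ℤ) : ℝ)) ^ 2)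
      = ((Hn n : ℤ) : ℝ) := by
    rw [tsum_fintype]
    have : Hn n = ∑ mu ∈ parts n, F mu ^ 2 * contentSum mu ^ 2 := rfl
    rw [this]
    unfold parts
    rw [Finset.sum_map]
    push_cast [F, contentSum, content]
    rfl
  rw [key]
  have h2 := Hn_eq n
  have h2R : (2 : ℝ) * ((Hn n : ℤ) : ℝ) = (n.factorial : ℝ) * n * ((n : ℝ) - 1) := by
    exact_mod_cast congrArg (fun z : ℤ => (z : ℝ)) h2
  have hfac : (n.factorial : ℝ) ≠ 0 := Nat.cast_ne_zero.2 n.factorial_ne_zero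
  rw [div_eq_iff hfac]
  field_simp
  linarith

end PaperStmt
end

section
/- For every natural number n, ∑_{r=0}^{n} ((−1)^r / (1 − 2r)) · binom(2r, r) · binom(n + r, 2r + 1) = n². (Equivalently, for every positive integer x one has x = 1 + ∑_{r≥1} binom(2r,r) · (−1)^r / ((1−2r)(2r+1)!) · p(x,r), where p(x,r) := ∏_{i=1}^r (x² − i²) and the sum terminates because p(x,r) = 0 for r ≥ x.) -/
open scoped BigOperators

namespace PaperStmt

private def Fq (n r : ℕ) : ℚ :=
  ((-1 : ℚ) ^ r / (1 - 2 * (r : ℚ))) * (Nat.choose (2 * r) r : ℚ)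
    * (Nat.choose (n + r) (2 * r + 1) : ℚ)

private def Gq (n r : ℕ) : ℚ :=
  -((-1 : ℚ) ^ r) * (r : ℚ) ^ 2 * (Nat.choose (2 * r) r : ℚ)
    * (Nat.choose (n + r) (2 * r) : ℚ) / (1 - 2 * (r : ℚ))

private lemma denom_ne (r : ℕ) : (1 - 2 * (r : ℚ)) ≠ 0 := by
  intro h
  have h2 : ((2 * r : ℕ) : ℚ) = ((1 : ℕ) : ℚ) := by push_cast; linarith
  have h3 : 2 * r = 1 := Nat.cast_injective h2
  omega

private lemma Fq_eq_zero {n r : ℕ} (h : n ≤ r) : Fq n r = 0 := by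
  have : Nat.choose (n + r) (2 * r + 1) = 0 := Nat.choose_eq_zero_of_lt (by omega)
  simp [Fq, this]

private lemma cert (n r : ℕ) :
    (n : ℚ) ^ 2 * Fq (n + 1) r - ((n : ℚ) + 1) ^ 2 * Fq n r = Gq n (r + 1) - Gq n r := by
  rcases lt_trichotomy r n with h | h | h
  · -- main case r < n
    have hp1 : (n + 1 + r).choose (2 * r + 1)
        = (n + r).choose (2 * r) + (n + r).choose (2 * r + 1) := by
      rw [show n + 1 + r = (n + r) + 1 by ring, Nat.choose_succ_succ]
    have hp2 : (n + (r + 1)).choose (2 * (r + 1))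
        = (n + r).choose (2 * r + 1) + (n + r).choose (2 * r + 2) := by
      rw [show n + (r + 1) = (n + r) + 1 by ring, show 2 * (r + 1) = (2 * r + 1) + 1 by ring,
        Nat.choose_succ_succ]
    have hcn : (n + r).choose (2 * r + 1) * (2 * r + 1) = (n + r).choose (2 * r) * (n - r) := by
      have := Nat.choose_succ_right_eq (n + r) (2 * r)
      rwa [show n + r - 2 * r = n - r by omega] at this
    have hdn : (n + r).choose (2 * r + 2) * (2 * r + 2)
        = (n + r).choose (2 * r + 1) * (n - (r + 1)) := by
      have := Nat.choose_succ_right_eq (n + r) (2 * r + 1)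
      rwa [show 2 * r + 1 + 1 = 2 * r + 2 by ring, show n + r - (2 * r + 1) = n - (r + 1) by omega]
        at this
    have hen : (r + 1) * (2 * (r + 1)).choose (r + 1) = 2 * (2 * r + 1) * (2 * r).choose r := by
      have := Nat.succ_mul_centralBinom_succ r
      simpa [Nat.centralBinom] using this
    -- cast to ℚ
    have hrn : (r : ℚ) ≤ (n : ℚ) := by exact_mod_cast h.le
    have hrn1 : ((r : ℚ) + 1) ≤ (n : ℚ) := by
      have : (r + 1 : ℕ) ≤ n := h
      exact_mod_cast this
    have hc : ((n + r).choose (2 * r + 1) : ℚ)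
        = ((n + r).choose (2 * r) : ℚ) * ((n : ℚ) - r) / (2 * r + 1) := by
      have := congrArg (fun m : ℕ => (m : ℚ)) hcn
      push_cast [Nat.cast_sub h.le] at this
      field_simp
      linarith [this]
    have hd : ((n + r).choose (2 * r + 2) : ℚ)
        = ((n + r).choose (2 * r + 1) : ℚ) * ((n : ℚ) - r - 1) / (2 * r + 2) := by
      have := congrArg (fun m : ℕ => (m : ℚ)) hdn
      push_cast [Nat.cast_sub (show r + 1 ≤ n from h)] at this
      field_simp
      linarith [this]
    have he : ((2 * (r + 1)).choose (r + 1) : ℚ)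
        = 2 * (2 * r + 1) * ((2 * r).choose r : ℚ) / (r + 1) := by
      have := congrArg (fun m : ℕ => (m : ℚ)) hen
      push_cast at this
      field_simp
      linarith [this]
    have h1 : (1 - 2 * (r : ℚ)) ≠ 0 := denom_ne r
    have h2 : (1 - 2 * ((r : ℚ) + 1)) ≠ 0 := by
      intro hh
      have hnn : (0 : ℚ) ≤ 2 * (r : ℚ) := by positivity
      linarith
    simp only [Fq, Gq, hp1, hp2]
    push_cast
    rw [hd, hc, he]
    have hr1 : ((r : ℚ) + 1) ≠ 0 := by positivity
    have hr2 : (2 * (r : ℚ) + 1) ≠ 0 := by positivity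
    have hr3 : (2 * (r : ℚ) + 2) ≠ 0 := by positivity
    field_simp
    ring
  · -- case r = n
    subst h
    have e1 : (r + 1 + r).choose (2 * r + 1) = 1 := by
      rw [show r + 1 + r = 2 * r + 1 by ring]; exact Nat.choose_self _
    have e2 : (r + r).choose (2 * r + 1) = 0 := Nat.choose_eq_zero_of_lt (by omega)
    have e3 : (r + (r + 1)).choose (2 * (r + 1)) = 0 := Nat.choose_eq_zero_of_lt (by omega)
    have e4 : (r + r).choose (2 * r) = 1 := by
      rw [show r + r = 2 * r by ring]; exact Nat.choose_self _
    simp only [Fq, Gq, e1, e2, e3, e4]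
    push_cast
    ring
  · -- case n < r
    have e1 : (n + 1 + r).choose (2 * r + 1) = 0 := Nat.choose_eq_zero_of_lt (by omega)
    have e2 : (n + r).choose (2 * r + 1) = 0 := Nat.choose_eq_zero_of_lt (by omega)
    have e3 : (n + (r + 1)).choose (2 * (r + 1)) = 0 := Nat.choose_eq_zero_of_lt (by omega)
    have e4 : (n + r).choose (2 * r) = 0 := Nat.choose_eq_zero_of_lt (by omega)
    simp only [Fq, Gq, e1, e2, e3, e4]
    push_cast
    ring

private lemma key (n : ℕ) :
    (n : ℚ) ^ 2 * (∑ r ∈ Finset.range (n + 1 + 1), Fq (n + 1) r)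
      = ((n : ℚ) + 1) ^ 2 * (∑ r ∈ Finset.range (n + 1 + 1), Fq n r) := by
  have tele : ∑ r ∈ Finset.range (n + 2), (Gq n (r + 1) - Gq n r)
      = Gq n (n + 1 + 1) - Gq n 0 := Finset.sum_range_sub (fun r => Gq n r) (n + 1 + 1)
  have hG0 : Gq n 0 = 0 := by simp [Gq]
  have hGtop : Gq n (n + 1 + 1) = 0 := by
    have : (n + (n + 1 + 1)).choose (2 * (n + 1 + 1)) = 0 := Nat.choose_eq_zero_of_lt (by omega)
    simp [Gq, this]
  have hsum : ∑ r ∈ Finset.range (n + 1 + 1),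
      ((n : ℚ) ^ 2 * Fq (n + 1) r - ((n : ℚ) + 1) ^ 2 * Fq n r) = 0 := by
    rw [Finset.sum_congr rfl (fun r _ => cert n r), tele, hG0, hGtop, sub_zero]
  rw [Finset.sum_sub_distrib, ← Finset.mul_sum, ← Finset.mul_sum] at hsum
  linarith [hsum]

/-- For every natural number `n`,
`∑_{r=0}^{n} ((-1)^r / (1-2r)) binom(2r,r) binom(n+r,2r+1) = n²`. -/
theorem stmt5 (n : ℕ) :
    ∑ r ∈ Finset.range (n + 1),
        ((-1 : ℚ) ^ r / (1 - 2 * (r : ℚ))) * (Nat.choose (2 * r) r : ℚ)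
          * (Nat.choose (n + r) (2 * r + 1) : ℚ)
      = (n : ℚ) ^ 2 := by
  have main : ∀ m : ℕ, ∑ r ∈ Finset.range (m + 1), Fq m r = (m : ℚ) ^ 2 := by
    intro m
    induction m with
    | zero => norm_num [Fq]
    | succ k ih =>
      rcases Nat.eq_zero_or_pos k with hk0 | hkpos
      · subst hk0
        norm_num [Fq, Finset.sum_range_succ]
      · have hk := key k
        have hext : ∑ r ∈ Finset.range (k + 1 + 1), Fq k r
            = ∑ r ∈ Finset.range (k + 1), Fq k r := by
          rw [Finset.sum_range_succ, Fq_eq_zero (by omega), add_zero]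
        rw [hext, ih] at hk
        have hne : ((k : ℚ)) ^ 2 ≠ 0 := by
          have hk0 : (k : ℚ) ≠ 0 := Nat.cast_ne_zero.mpr (by omega)
          positivity
        exact mul_left_cancel₀ hne (by rw [hk]; push_cast; ring)
  simpa [Fq] using main n

end PaperStmt
end

section
/- For all positive integers ℓ and n, ∑_{r=ℓ−1}^{n−1} (−1)^{ℓ+r+1} · (2ℓ²) / ((r+ℓ+1)! (r−ℓ+1)!) · p(n, r) = δ_{ℓ,n}, where δ_{ℓ,n} equals 1 if ℓ = n and 0 otherwise. (The sum may be taken over all r ≥ ℓ−1 since p(n,r) = 0 for r ≥ n.) -/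
open scoped BigOperators
open Finset

namespace PaperStmt

/-- `p(x, r) := ∏_{i=1}^r (x² - i²)`. -/
def p (x : ℚ) (r : ℕ) : ℚ := ∏ i ∈ Finset.Icc 1 r, (x ^ 2 - (i : ℚ) ^ 2)


lemma pascal_step (m : ℕ) (P : ℕ → ℚ) :
    ∑ k ∈ range (m+2), (-1:ℚ)^k * ((m+1).choose k : ℚ) * P k
      = ∑ k ∈ range (m+1), (-1:ℚ)^k * (m.choose k : ℚ) * (P k - P (k+1)) := by
  have h1 : ∑ k ∈ range (m+2), (-1:ℚ)^k * ((m+1).choose k : ℚ) * P k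
      = (∑ k ∈ range (m+1), (-1:ℚ)^(k+1) * ((m+1).choose (k+1) : ℚ) * P (k+1)) + P 0 := by
    rw [Finset.sum_range_succ']; simp
  have h2 : ∑ k ∈ range (m+1), (-1:ℚ)^k * (m.choose k : ℚ) * (P k - P (k+1))
      = (∑ k ∈ range (m+1), (-1:ℚ)^k * (m.choose k : ℚ) * P k)
        - ∑ k ∈ range (m+1), (-1:ℚ)^k * (m.choose k : ℚ) * P (k+1) := by
    rw [← Finset.sum_sub_distrib]; congr 1; ext k; ring
  have h3 : ∑ k ∈ range (m+1), (-1:ℚ)^k * (m.choose k : ℚ) * P k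
      = (∑ k ∈ range m, (-1:ℚ)^(k+1) * (m.choose (k+1) : ℚ) * P (k+1)) + P 0 := by
    rw [Finset.sum_range_succ']; simp
  rw [h1, h2, h3]
  have h4 : ∀ k, ((m+1).choose (k+1) : ℚ) = (m.choose k : ℚ) + (m.choose (k+1) : ℚ) := by
    intro k; rw [Nat.choose_succ_succ]; push_cast; ring
  have h5 : ∑ k ∈ range (m+1), (-1:ℚ)^(k+1) * ((m+1).choose (k+1) : ℚ) * P (k+1)
      = (∑ k ∈ range (m+1), (-1:ℚ)^(k+1) * (m.choose k : ℚ) * P (k+1))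
        + ∑ k ∈ range (m+1), (-1:ℚ)^(k+1) * (m.choose (k+1) : ℚ) * P (k+1) := by
    rw [← Finset.sum_add_distrib]; refine Finset.sum_congr rfl fun k _ => ?_
    rw [h4]; ring
  rw [h5]
  have h6 : ∑ k ∈ range (m+1), (-1:ℚ)^(k+1) * (m.choose (k+1) : ℚ) * P (k+1)
      = ∑ k ∈ range m, (-1:ℚ)^(k+1) * (m.choose (k+1) : ℚ) * P (k+1) := by
    rw [Finset.sum_range_succ, Nat.choose_succ_self]; simp
  have h7 : ∑ k ∈ range (m+1), (-1:ℚ)^(k+1) * (m.choose k : ℚ) * P (k+1)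
      = - ∑ k ∈ range (m+1), (-1:ℚ)^k * (m.choose k : ℚ) * P (k+1) := by
    rw [← Finset.sum_neg_distrib]; refine Finset.sum_congr rfl fun k _ => ?_; ring
  rw [h6, h7]; ring


lemma prod_diff (m : ℕ) (a : ℚ) (k : ℕ) :
    (∏ j ∈ range (m+1), (a + k + (j+1))) - (∏ j ∈ range (m+1), (a + (k+1) + (j+1)))
      = (-((m:ℚ)+1)) * ∏ j ∈ range m, ((a+1) + k + (j+1)) := by
  have e1 : (∏ j ∈ range (m+1), (a + k + (j+1)))
      = (∏ j ∈ range m, ((a+1) + k + (j+1))) * (a + k + 1) := by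
    rw [Finset.prod_range_succ']
    refine congrArg₂ _ (Finset.prod_congr rfl fun j _ => by push_cast; ring) (by norm_num)
  have e2 : (∏ j ∈ range (m+1), (a + (k+1) + (j+1)))
      = (∏ j ∈ range m, ((a+1) + k + (j+1))) * (a + k + ((m:ℚ)+2)) := by
    rw [Finset.prod_range_succ]
    refine congrArg₂ _ (Finset.prod_congr rfl fun j _ => by ring) (by push_cast; ring)
  rw [e1, e2]; ring

lemma altsum (m : ℕ) (hm : 1 ≤ m) : ∀ a : ℚ,
    ∑ k ∈ range (m+1), (-1:ℚ)^k * (m.choose k : ℚ) * ∏ j ∈ range (m-1), (a + k + (j+1)) = 0 := by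
  induction m, hm using Nat.le_induction with
  | base =>
    intro a; simp [Finset.sum_range_succ]
  | succ m hm ih =>
    intro a
    obtain ⟨m', rfl⟩ : ∃ m', m = m'+1 := ⟨m-1, by omega⟩
    rw [pascal_step]
    calc ∑ k ∈ range (m'+1+1), (-1:ℚ)^k * ((m'+1).choose k : ℚ) *
            ((∏ j ∈ range (m'+1+1-1), (a + k + (j+1))) - ∏ j ∈ range (m'+1+1-1), (a + ((k:ℕ)+1 : ℕ) + (j+1)))
        = ∑ k ∈ range (m'+1+1), (-((m':ℚ)+1)) * ((-1:ℚ)^k * ((m'+1).choose k : ℚ) *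
            ∏ j ∈ range (m'+1-1), ((a+1) + k + (j+1))) := by
          refine Finset.sum_congr rfl fun k _ => ?_
          have hd := prod_diff m' a k
          rw [show m'+1+1-1 = m'+1 from rfl, show m'+1-1 = m' from rfl]
          push_cast at hd ⊢
          rw [hd]; ring
      _ = (-((m':ℚ)+1)) * ∑ k ∈ range (m'+1+1), (-1:ℚ)^k * ((m'+1).choose k : ℚ) *
            ∏ j ∈ range (m'+1-1), ((a+1) + k + (j+1)) := by rw [Finset.mul_sum]
      _ = 0 := by rw [ih (a+1)]; ring


lemma prod_sub_eq (n r : ℕ) : ∏ i ∈ Icc 1 r, (n - i) = (n-1).descFactorial r := by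
  induction r with
  | zero => simp
  | succ r ih =>
    rw [Finset.prod_Icc_succ_top (by omega), ih, Nat.descFactorial_succ, mul_comm]
    congr 1
    omega

lemma prod_add_eq (n r : ℕ) : ∏ i ∈ Icc 1 r, (n + i) = (n+1).ascFactorial r := by
  induction r with
  | zero => simp
  | succ r ih =>
    rw [Finset.prod_Icc_succ_top (by omega), ih, Nat.ascFactorial_succ, mul_comm]
    congr 1
    omega

lemma prod_range_asc (b t : ℕ) : ∏ j ∈ range t, (b + (j+1)) = (b+1).ascFactorial t := by
  induction t with
  | zero => simp
  | succ t ih =>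
    rw [Finset.prod_range_succ, ih, Nat.ascFactorial_succ, mul_comm]
    congr 1
    omega

lemma key_nat (ℓ m k : ℕ) (hℓ : 1 ≤ ℓ) (hm : 1 ≤ m) (hk : k ≤ m) :
    (∏ i ∈ Icc 1 (ℓ-1+k), ((ℓ+m - i) * (ℓ+m + i))) * ((ℓ+m) * m.factorial)
      = (m.choose k * ∏ j ∈ range (m-1), (2*ℓ+k+(j+1))) * ((2*ℓ+k).factorial * k.factorial) := by
  set n := ℓ + m with hn
  set r := ℓ - 1 + k with hr
  apply Nat.eq_of_mul_eq_mul_right (show 0 < (m-k).factorial * n.factorial by positivity)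
  have hP : ∏ i ∈ Icc 1 r, ((n - i) * (n + i))
      = (n-1).descFactorial r * (n+1).ascFactorial r := by
    rw [Finset.prod_mul_distrib, prod_sub_eq, prod_add_eq]
  have f1 : (m-k).factorial * (n-1).descFactorial r = (n-1).factorial := by
    have h := Nat.factorial_mul_descFactorial (n := n-1) (k := r) (by omega)
    rwa [show n-1-r = m-k by omega] at h
  have f2 : n.factorial * (n+1).ascFactorial r = (n+r).factorial :=
    Nat.factorial_mul_ascFactorial n r
  have f3 : (2*ℓ+k).factorial * (2*ℓ+k+1).ascFactorial (m-1) = (n+r).factorial := by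
    have h := Nat.factorial_mul_ascFactorial (2*ℓ+k) (m-1)
    rwa [show 2*ℓ+k+(m-1) = n+r by omega] at h
  have f4 : m.choose k * k.factorial * (m-k).factorial = m.factorial :=
    Nat.choose_mul_factorial_mul_factorial hk
  have f5 : n * (n-1).factorial = n.factorial := Nat.mul_factorial_pred (by omega)
  rw [hP, prod_range_asc]
  calc (n-1).descFactorial r * (n+1).ascFactorial r * (n * m.factorial)
        * ((m-k).factorial * n.factorial)
      = ((m-k).factorial * (n-1).descFactorial r) * (n.factorial * (n+1).ascFactorial r)
        * (n * m.factorial) := by ring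
    _ = (n-1).factorial * (n+r).factorial * (n * m.factorial) := by rw [f1, f2]
    _ = (n * (n-1).factorial) * (n+r).factorial * m.factorial := by ring
    _ = n.factorial * (n+r).factorial * m.factorial := by rw [f5]
    _ = n.factorial * ((2*ℓ+k).factorial * (2*ℓ+k+1).ascFactorial (m-1))
        * (m.choose k * k.factorial * (m-k).factorial) := by rw [f3, f4]
    _ = m.choose k * (2*ℓ+k+1).ascFactorial (m-1) * ((2*ℓ+k).factorial * k.factorial)
        * ((m-k).factorial * n.factorial) := by ring

lemma key_nat_diag (n : ℕ) (hn : 1 ≤ n) :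
    2*n*n * ∏ i ∈ Icc 1 (n-1), ((n - i) * (n + i)) = (2*n).factorial := by
  apply Nat.eq_of_mul_eq_mul_right (show 0 < n.factorial by positivity)
  have hP : ∏ i ∈ Icc 1 (n-1), ((n - i) * (n + i))
      = (n-1).descFactorial (n-1) * (n+1).ascFactorial (n-1) := by
    rw [Finset.prod_mul_distrib, prod_sub_eq, prod_add_eq]
  have f1 : (n-1).descFactorial (n-1) = (n-1).factorial := Nat.descFactorial_self _
  have f2 : n.factorial * (n+1).ascFactorial (n-1) = (n+(n-1)).factorial :=
    Nat.factorial_mul_ascFactorial n (n-1)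
  have f5 : n * (n-1).factorial = n.factorial := Nat.mul_factorial_pred (by omega)
  have f6 : (2*n) * (2*n-1).factorial = (2*n).factorial := Nat.mul_factorial_pred (by omega)
  rw [hP, f1]
  calc 2*n*n * ((n-1).factorial * (n+1).ascFactorial (n-1)) * n.factorial
      = 2*n * (n * (n-1).factorial) * (n.factorial * (n+1).ascFactorial (n-1)) := by ring
    _ = 2*n * n.factorial * (n+(n-1)).factorial := by rw [f5, f2]
    _ = (2*n * (2*n-1).factorial) * n.factorial := by rw [show n+(n-1) = 2*n-1 by omega]; ring
    _ = (2*n).factorial * n.factorial := by rw [f6]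
lemma p_cast (n r : ℕ) (h : r ≤ n) :
    p n r = ((∏ i ∈ Icc 1 r, ((n - i) * (n + i)) : ℕ) : ℚ) := by
  unfold p
  push_cast
  refine Finset.prod_congr rfl fun i hi => ?_
  rw [Finset.mem_Icc] at hi
  rw [Nat.cast_sub (le_trans hi.2 h)]
  ring


lemma term_eq (ℓ m k : ℕ) (hℓ : 1 ≤ ℓ) (hm : 1 ≤ m) (hk : k ≤ m) :
    (-1:ℚ)^(ℓ + (ℓ-1+k) + 1) * (2*(ℓ:ℚ)^2)
        / ((Nat.factorial ((ℓ-1+k) + ℓ + 1) : ℚ) * (Nat.factorial ((ℓ-1+k) + 1 - ℓ) : ℚ))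
        * p (ℓ+m) (ℓ-1+k)
    = (2*(ℓ:ℚ)^2 / (((ℓ:ℚ)+m) * (m.factorial : ℚ)))
        * ((-1:ℚ)^k * (m.choose k : ℚ) * ∏ j ∈ range (m-1), (2*(ℓ:ℚ) + k + (j+1))) := by
  have hc : ((ℓ:ℚ)+(m:ℚ)) = ((ℓ+m : ℕ):ℚ) := by push_cast; ring
  rw [hc, show ℓ + (ℓ-1+k) + 1 = 2*ℓ+k by omega, show (ℓ-1+k) + ℓ + 1 = 2*ℓ+k by omega,
    show (ℓ-1+k) + 1 - ℓ = k by omega, p_cast (ℓ+m) (ℓ-1+k) (by omega)]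
  have hsign : (-1:ℚ)^(2*ℓ+k) = (-1:ℚ)^k := by
    rw [pow_add, pow_mul]; norm_num
  rw [hsign]
  have hQ : ∏ j ∈ range (m-1), (2*(ℓ:ℚ) + k + (j+1))
      = ((∏ j ∈ range (m-1), (2*ℓ+k+(j+1)) : ℕ) : ℚ) := by
    push_cast
    exact Finset.prod_congr rfl fun j _ => by ring
  rw [hQ]
  have hkey := key_nat ℓ m k hℓ hm hk
  have hkeyQ : ((∏ i ∈ Icc 1 (ℓ-1+k), ((ℓ+m - i) * (ℓ+m + i)) : ℕ) : ℚ) * (((ℓ+m:ℕ):ℚ) * (m.factorial : ℚ))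
      = ((m.choose k : ℚ) * ((∏ j ∈ range (m-1), (2*ℓ+k+(j+1)) : ℕ) : ℚ))
        * (((2*ℓ+k).factorial : ℚ) * (k.factorial : ℚ)) := by
    exact_mod_cast congrArg (Nat.cast : ℕ → ℚ) hkey
  have h1 : ((Nat.factorial (2*ℓ+k) : ℚ) * (Nat.factorial k : ℚ)) ≠ 0 := by positivity
  have h2 : ((((ℓ+m:ℕ)):ℚ) * (m.factorial : ℚ)) ≠ 0 := by positivity
  rw [div_mul_eq_mul_div, div_mul_eq_mul_div, div_eq_div_iff h1 h2]
  linear_combination ((-1:ℚ)^k * 2 * (ℓ:ℚ)^2) * hkeyQ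



/-- Representation of the Kronecker delta:
`δ_{ℓ,n} = ∑_{r=ℓ-1}^{n-1} (-1)^{ℓ+r+1} 2ℓ² / ((r+ℓ+1)! (r-ℓ+1)!) p(n, r)` for `ℓ, n ≥ 1`. -/
theorem stmt6 (ℓ n : ℕ) (hℓ : 1 ≤ ℓ) (hn : 1 ≤ n) :
    ∑ r ∈ Finset.Icc (ℓ - 1) (n - 1),
        (-1 : ℚ) ^ (ℓ + r + 1) * (2 * (ℓ : ℚ) ^ 2)
            / ((Nat.factorial (r + ℓ + 1) : ℚ) * (Nat.factorial (r + 1 - ℓ) : ℚ)) * p n r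
      = if ℓ = n then 1 else 0 := by
  rcases lt_trichotomy ℓ n with hlt | heq | hgt
  · -- ℓ < n
    rw [if_neg (by omega)]
    obtain ⟨m, rfl⟩ : ∃ m, n = ℓ + m := ⟨n - ℓ, by omega⟩
    have hm : 1 ≤ m := by omega
    rw [← Finset.Ico_add_one_right_eq_Icc, show ℓ + m - 1 + 1 = ℓ + m by omega,
      Finset.sum_Ico_eq_sum_range, show ℓ + m - (ℓ - 1) = m + 1 by omega]
    simp only [Nat.cast_add]
    have hterm : ∀ k ∈ range (m+1),
        (-1 : ℚ) ^ (ℓ + (ℓ - 1 + k) + 1) * (2 * (ℓ : ℚ) ^ 2)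
            / ((Nat.factorial ((ℓ - 1 + k) + ℓ + 1) : ℚ) * (Nat.factorial ((ℓ - 1 + k) + 1 - ℓ) : ℚ))
            * p (ℓ + m) (ℓ - 1 + k)
          = (2*(ℓ:ℚ)^2 / (((ℓ:ℚ)+(m:ℚ)) * (m.factorial : ℚ)))
            * ((-1:ℚ)^k * (m.choose k : ℚ) * ∏ j ∈ range (m-1), (2*(ℓ:ℚ) + k + (j+1))) := by
      intro k hk
      rw [Finset.mem_range] at hk
      exact term_eq ℓ m k hℓ hm (by omega)
    rw [Finset.sum_congr rfl hterm, ← Finset.mul_sum]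
    have := altsum m hm (2*(ℓ:ℚ))
    have e : ∑ k ∈ range (m+1), (-1:ℚ)^k * (m.choose k : ℚ)
        * ∏ j ∈ range (m-1), (2*(ℓ:ℚ) + k + (j+1)) = 0 := this
    rw [e, mul_zero]
  · -- ℓ = n
    subst heq
    rw [if_pos rfl, Finset.Icc_self, Finset.sum_singleton]
    rw [show ℓ + (ℓ - 1) + 1 = 2*ℓ by omega, show (ℓ - 1) + ℓ + 1 = 2*ℓ by omega,
      show (ℓ - 1) + 1 - ℓ = 0 by omega, p_cast ℓ (ℓ-1) (by omega)]
    have hd := key_nat_diag ℓ hℓ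
    have hdQ : 2*(ℓ:ℚ)*(ℓ:ℚ) * ((∏ i ∈ Icc 1 (ℓ-1), ((ℓ - i) * (ℓ + i)) : ℕ) : ℚ)
        = ((2*ℓ).factorial : ℚ) := by exact_mod_cast congrArg (Nat.cast : ℕ → ℚ) hd
    have hsign : (-1:ℚ)^(2*ℓ) = 1 := by rw [pow_mul]; norm_num
    rw [hsign, Nat.factorial_zero]
    have hne : ((2*ℓ).factorial : ℚ) ≠ 0 := by positivity
    rw [Nat.cast_one, mul_one, div_mul_eq_mul_div, one_mul, div_eq_iff hne]
    linear_combination hdQ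
  · -- n < ℓ
    rw [if_neg (by omega), Finset.Icc_eq_empty (by omega), Finset.sum_empty]

end PaperStmt
end

section
/- For all nonnegative integers ℓ and n, ∑_{r=ℓ}^{n} (−1)^{ℓ+r} · (2 − δ_{0,n}) / ((r+ℓ)! (r−ℓ)!) · q(n, r) = δ_{ℓ,n}, where δ denotes the Kronecker delta. (The sum may be taken over all r ≥ ℓ since q(n,r) = 0 for r > n.) -/
open scoped BigOperators

namespace PaperStmt

/-- `q(x, r) := ∏_{i=0}^{r-1} (x² - i²)`, with `q(x, 0) = 1`. -/
def q (x : ℚ) (r : ℕ) : ℚ := ∏ i ∈ Finset.range r, (x ^ 2 - (i : ℚ) ^ 2)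

lemma q_succ (x : ℚ) (r : ℕ) : q x (r + 1) = q x r * (x ^ 2 - (r : ℚ) ^ 2) := by
  simp [q, Finset.prod_range_succ]

lemma q_fac (n : ℕ) (hn : 1 ≤ n) :
    ∀ r, r ≤ n → q n r * ((n - r).factorial : ℚ) * ((n : ℚ) + r) =
      ((n + r).factorial : ℚ) * (n : ℚ) := by
  intro r
  induction r with
  | zero => simp [q]
  | succ r ih =>
    intro hr
    have hrn : r ≤ n := by omega
    have IH := ih hrn
    have h2 : (n - r).factorial = (n - r) * (n - (r + 1)).factorial := by
      rw [show n - r = (n - (r + 1)) + 1 by omega, Nat.factorial_succ]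
    have h3 : (n + (r + 1)).factorial = (n + r + 1) * (n + r).factorial := by
      rw [show n + (r + 1) = (n + r) + 1 by rfl, Nat.factorial_succ]
    rw [q_succ, h3]
    rw [h2] at IH
    have hc : ((n - r : ℕ) : ℚ) = (n : ℚ) - r := by
      push_cast [hrn]; ring
    push_cast [hc] at IH ⊢
    linear_combination ((n : ℚ) + r + 1) * IH

lemma q_diag (n : ℕ) (hn : 1 ≤ n) : q n n * 2 = ((n + n).factorial : ℚ) := by
  have H := q_fac n hn n le_rfl
  simp only [Nat.sub_self, Nat.factorial_zero, Nat.cast_one, mul_one] at H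
  have hn0 : (n : ℚ) ≠ 0 := Nat.cast_ne_zero.mpr (by omega)
  apply mul_right_cancel₀ hn0
  linear_combination H

/-- Telescoping antiderivative. -/
def g (ℓ n r : ℕ) : ℚ :=
  (-1 : ℚ) ^ (ℓ + r) * (-2) * (((r : ℚ) ^ 2 - (ℓ : ℚ) ^ 2) / ((n : ℚ) ^ 2 - (ℓ : ℚ) ^ 2))
    * q n r / (((r + ℓ).factorial : ℚ) * ((r - ℓ).factorial : ℚ))

lemma g_step (ℓ n r : ℕ) (hr : ℓ ≤ r) (hln : ℓ < n) :
    g ℓ n (r + 1) - g ℓ n r =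
      (-1 : ℚ) ^ (ℓ + r) * 2 / (((r + ℓ).factorial : ℚ) * ((r - ℓ).factorial : ℚ)) * q n r := by
  unfold g
  rw [show (r + 1) + ℓ = (r + ℓ) + 1 by omega, show (r + 1) - ℓ = (r - ℓ) + 1 by omega,
    Nat.factorial_succ, Nat.factorial_succ, q_succ,
    show ℓ + (r + 1) = (ℓ + r) + 1 by rfl, pow_succ]
  have hfac1 : (((r + ℓ).factorial : ℚ)) ≠ 0 := Nat.cast_ne_zero.2 (Nat.factorial_ne_zero _)
  have hfac2 : (((r - ℓ).factorial : ℚ)) ≠ 0 := Nat.cast_ne_zero.2 (Nat.factorial_ne_zero _)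
  have hlr : (ℓ : ℚ) < (n : ℚ) := by exact_mod_cast hln
  have hl0 : (0 : ℚ) ≤ (ℓ : ℚ) := by positivity
  have hA : (n : ℚ) ^ 2 - (ℓ : ℚ) ^ 2 ≠ 0 := by nlinarith
  have hsub : ((r - ℓ : ℕ) : ℚ) = (r : ℚ) - (ℓ : ℚ) := by push_cast [hr]; ring
  have hrl : (ℓ : ℚ) ≤ (r : ℚ) := by exact_mod_cast hr
  have hd1 : (r : ℚ) + (ℓ : ℚ) + 1 ≠ 0 := by positivity
  have hd2 : (r : ℚ) - (ℓ : ℚ) + 1 ≠ 0 := by nlinarith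
  push_cast [hsub]
  field_simp
  ring

/-- Representation of the Kronecker delta:
`δ_{ℓ,n} = ∑_{r=ℓ}^{n} (-1)^{ℓ+r} (2 - δ_{0,n}) / ((r+ℓ)! (r-ℓ)!) q(n, r)`
for nonnegative integers `ℓ, n`. -/
theorem stmt7 (ℓ n : ℕ) :
    ∑ r ∈ Finset.Icc ℓ n,
        (-1 : ℚ) ^ (ℓ + r) * ((2 : ℚ) - if (0 : ℕ) = n then 1 else 0)
            / ((Nat.factorial (r + ℓ) : ℚ) * (Nat.factorial (r - ℓ) : ℚ)) * q n r
      = if ℓ = n then 1 else 0 := by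
  rcases lt_trichotomy ℓ n with h | rfl | h
  · -- ℓ < n
    have hn0 : ¬((0 : ℕ) = n) := by omega
    have hln : ¬(ℓ = n) := by omega
    rw [if_neg hln]
    simp only [if_neg hn0, sub_zero]
    have key : ∀ r ∈ Finset.Icc ℓ n,
        (-1 : ℚ) ^ (ℓ + r) * 2 / (((r + ℓ).factorial : ℚ) * ((r - ℓ).factorial : ℚ)) * q n r
          = g ℓ n (r + 1) - g ℓ n r := by
      intro r hrmem
      rw [Finset.mem_Icc] at hrmem
      exact (g_step ℓ n r hrmem.1 h).symm
    rw [Finset.sum_congr rfl key, ← Finset.Ico_add_one_right_eq_Icc, Finset.sum_Ico_eq_sum_range]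
    have tele : ∑ i ∈ Finset.range (n + 1 - ℓ), (g ℓ n (ℓ + i + 1) - g ℓ n (ℓ + i))
        = g ℓ n (ℓ + (n + 1 - ℓ)) - g ℓ n (ℓ + 0) :=
      Finset.sum_range_sub (fun i => g ℓ n (ℓ + i)) _
    rw [tele, show ℓ + (n + 1 - ℓ) = n + 1 by omega]
    have hq0 : q n (n + 1) = 0 := by
      rw [q_succ]; ring
    have hg1 : g ℓ n (n + 1) = 0 := by simp [g, hq0]
    have hg2 : g ℓ n (ℓ + 0) = 0 := by simp [g]
    rw [hg1, hg2, sub_zero]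
  · -- ℓ = n
    rw [Finset.Icc_self, Finset.sum_singleton, if_pos rfl]
    rcases Nat.eq_zero_or_pos ℓ with rfl | hl
    · norm_num [q]
    · have hne : ¬((0 : ℕ) = ℓ) := by omega
      rw [if_neg hne, Nat.sub_self, Nat.factorial_zero]
      have hq := q_diag ℓ hl
      have hfac : (((ℓ + ℓ).factorial : ℚ)) ≠ 0 := Nat.cast_ne_zero.2 (Nat.factorial_ne_zero _)
      have hpow : (-1 : ℚ) ^ (ℓ + ℓ) = 1 := Even.neg_one_pow ⟨ℓ, rfl⟩
      rw [hpow]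
      field_simp
      linear_combination hq
  · -- n < ℓ
    rw [Finset.Icc_eq_empty (by omega), Finset.sum_empty, if_neg (by omega)]

end PaperStmt
end

section
/- For every integer r ≥ 2, ∑_{ℓ=2}^{r} (−1)^ℓ ℓ / ((r+ℓ)! (r−ℓ)!) = 3(r−1) / (2(2r−1) (r−1)! (r+1)!). -/
open scoped BigOperators

namespace PaperStmt

/-- Telescoping certificate for the sum. -/
noncomputable def Tc (r ℓ : ℕ) : ℚ :=
  (-1 : ℚ) ^ ℓ * ((r : ℚ) - (2 * r - 1) * ℓ - 2 * ℓ ^ 2) /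
    (2 * (2 * (r : ℚ) - 1) * (Nat.factorial (r + ℓ) : ℚ) * (Nat.factorial (r - ℓ) : ℚ))

lemma fac_ne (n : ℕ) : ((Nat.factorial n : ℚ)) ≠ 0 := by
  exact_mod_cast Nat.factorial_ne_zero n

lemma step (r ℓ : ℕ) (hlt : ℓ < r) :
    (-1 : ℚ) ^ ℓ * (ℓ : ℚ) / ((Nat.factorial (r + ℓ) : ℚ) * (Nat.factorial (r - ℓ) : ℚ))
      = Tc r (ℓ + 1) - Tc r ℓ := by
  obtain ⟨k, rfl⟩ : ∃ k, r = ℓ + 1 + k := ⟨r - (ℓ + 1), by omega⟩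
  unfold Tc
  have e1 : ℓ + 1 + k - ℓ = k + 1 := by omega
  have e2 : ℓ + 1 + k - (ℓ + 1) = k := by omega
  have e3 : ℓ + 1 + k + (ℓ + 1) = (ℓ + 1 + k + ℓ) + 1 := by omega
  rw [e1, e2, e3, Nat.factorial_succ, Nat.factorial_succ]
  have hr1 : (2 * ((ℓ : ℚ) + 1 + k) - 1) ≠ 0 := by
    have : (0:ℚ) < 2 * ((ℓ : ℚ) + 1 + k) - 1 := by
      have hl : (0:ℚ) ≤ (ℓ:ℚ) := Nat.cast_nonneg ℓ
      have hk : (0:ℚ) ≤ (k:ℚ) := Nat.cast_nonneg k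
      nlinarith
    exact ne_of_gt this
  have hf1 := fac_ne (ℓ + 1 + k + ℓ)
  have hf2 := fac_ne k
  have hk1 : ((k : ℚ) + 1) ≠ 0 := by positivity
  have hm : ((ℓ + 1 + k + ℓ : ℕ) : ℚ) + 1 ≠ 0 := by positivity
  have hr2 : ((ℓ : ℚ) + 1 + k) * 2 - 1 ≠ 0 := by rwa [mul_comm]
  push_cast
  field_simp
  ring

lemma partial_sum (r : ℕ) : ∀ n, 2 ≤ n → n < r →
    ∑ ℓ ∈ Finset.Icc 2 n,
        (-1 : ℚ) ^ ℓ * (ℓ : ℚ) / ((Nat.factorial (r + ℓ) : ℚ) * (Nat.factorial (r - ℓ) : ℚ))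
      = Tc r (n + 1) - Tc r 2 := by
  intro n hn
  induction n, hn using Nat.le_induction with
  | base =>
    intro h2
    rw [Finset.Icc_self, Finset.sum_singleton, step r 2 h2]
  | succ n hn ih =>
    intro hlt
    rw [Finset.sum_Icc_succ_top (by omega), ih (by omega), step r (n + 1) hlt]
    ring

lemma top_cancel (r : ℕ) (hr : 1 ≤ r) :
    Tc r r + (-1 : ℚ) ^ r * (r : ℚ) / ((Nat.factorial (r + r) : ℚ) * (Nat.factorial (r - r) : ℚ))
      = 0 := by
  unfold Tc
  rw [Nat.sub_self, Nat.factorial_zero]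
  have hr1 : (2 * (r : ℚ) - 1) ≠ 0 := by
    have h1 : (1:ℚ) ≤ (r:ℚ) := by exact_mod_cast hr
    nlinarith [sq_nonneg ((r:ℚ) - 1)]
  have hf1 := fac_ne (r + r)
  have hr2 : (r : ℚ) * 2 - 1 ≠ 0 := by rwa [mul_comm]
  push_cast
  field_simp
  ring

/-- For `r ≥ 2`, `∑_{ℓ=2}^{r} (-1)^ℓ ℓ / ((r+ℓ)!(r-ℓ)!) = 3(r-1)/(2(2r-1)(r-1)!(r+1)!)`. -/
theorem stmt9 (r : ℕ) (hr : 2 ≤ r) :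
    ∑ ℓ ∈ Finset.Icc 2 r,
        (-1 : ℚ) ^ ℓ * (ℓ : ℚ) / ((Nat.factorial (r + ℓ) : ℚ) * (Nat.factorial (r - ℓ) : ℚ))
      = 3 * ((r : ℚ) - 1)
          / (2 * (2 * (r : ℚ) - 1) * (Nat.factorial (r - 1) : ℚ) * (Nat.factorial (r + 1) : ℚ)) := by
  have key : ∑ ℓ ∈ Finset.Icc 2 r,
        (-1 : ℚ) ^ ℓ * (ℓ : ℚ) / ((Nat.factorial (r + ℓ) : ℚ) * (Nat.factorial (r - ℓ) : ℚ))
      = - Tc r 2 := by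
    rcases eq_or_lt_of_le hr with h | h
    · subst h
      rw [Finset.Icc_self, Finset.sum_singleton]
      have := top_cancel 2 (by omega)
      linarith
    · obtain ⟨m, rfl⟩ : ∃ m, r = m + 1 := ⟨r - 1, by omega⟩
      rw [Finset.sum_Icc_succ_top (by omega), partial_sum (m + 1) m (by omega) (by omega)]
      have := top_cancel (m + 1) (by omega)
      linarith
  rw [key]
  -- now compute -Tc r 2 explicitly
  obtain ⟨s, rfl⟩ : ∃ s, r = s + 2 := ⟨r - 2, by omega⟩
  unfold Tc
  have e1 : s + 2 - 2 = s := by omega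
  have e2 : s + 2 - 1 = s + 1 := by omega
  have e3 : s + 2 + 2 = (s + 2 + 1) + 1 := by omega
  rw [e1, e2, e3, Nat.factorial_succ (s + 2 + 1), Nat.factorial_succ s]
  have hr1 : (2 * ((s : ℚ) + 2) - 1) ≠ 0 := by
    have : (0:ℚ) ≤ (s:ℚ) := Nat.cast_nonneg s
    nlinarith
  have hf1 := fac_ne s
  have hf2 := fac_ne (s + 2 + 1)
  have hs1 : ((s : ℚ) + 1) ≠ 0 := by positivity
  have hm : ((s + 2 + 1 : ℕ) : ℚ) + 1 ≠ 0 := by positivity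
  have hr2 : ((s : ℚ) + 2) * 2 - 1 ≠ 0 := by rwa [mul_comm]
  push_cast
  field_simp
  ring

end PaperStmt
end

section
/- For every integer r ≥ 2, ∑_{ℓ=2}^{r} (−1)^ℓ ℓ² (H_ℓ − 1) / ((r+ℓ)! (r−ℓ)!) = 1 / (4(r−1)(2r−1) ((r−1)!)²), where H_ℓ = 1 + 1/2 + … + 1/ℓ is the ℓ-th harmonic number. -/
open scoped BigOperators

namespace PaperStmt

/-- For `r ≥ 2`,
`∑_{ℓ=2}^{r} (-1)^ℓ ℓ² (H_ℓ - 1) / ((r+ℓ)!(r-ℓ)!) = 1/(4(r-1)(2r-1)((r-1)!)²)`,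
where `H_ℓ` is the `ℓ`-th harmonic number. -/
theorem stmt11 (r : ℕ) (hr : 2 ≤ r) :
    ∑ ℓ ∈ Finset.Icc 2 r,
        (-1 : ℚ) ^ ℓ * (ℓ : ℚ) ^ 2 * (harmonic ℓ - 1)
          / ((Nat.factorial (r + ℓ) : ℚ) * (Nat.factorial (r - ℓ) : ℚ))
      = 1 / (4 * ((r : ℚ) - 1) * (2 * (r : ℚ) - 1) * ((Nat.factorial (r - 1) : ℚ)) ^ 2) := by
  have hr1 : (1:ℚ) ≤ (r:ℚ) - 1 := by
    have : (2:ℚ) ≤ (r:ℚ) := by exact_mod_cast hr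
    linarith
  have hx1 : ((r:ℚ) - 1) ≠ 0 := by linarith
  have hx2 : (2 * (r:ℚ) - 1) ≠ 0 := by linarith
  have key : ∀ m : ℕ, 2 ≤ m → m ≤ r →
      ∑ ℓ ∈ Finset.Icc 2 m,
          (-1 : ℚ) ^ ℓ * (ℓ : ℚ) ^ 2 * (harmonic ℓ - 1)
            / ((Nat.factorial (r + ℓ) : ℚ) * (Nat.factorial (r - ℓ) : ℚ))
        = (harmonic m - 1) * (-1:ℚ)^m * (m:ℚ) * ((m:ℚ)+1) * ((r:ℚ)-(m:ℚ))
            / (2*((r:ℚ)-1) * (Nat.factorial (r+m):ℚ) * (Nat.factorial (r-m):ℚ))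
          + (-1:ℚ)^m * (((m:ℚ)+1)*(2*(r:ℚ)-1)-(3*(r:ℚ)-2)) * ((r:ℚ)-(m:ℚ)) * ((r:ℚ)+(m:ℚ))
            / (4*((r:ℚ)-1)^2*(2*(r:ℚ)-1) * (Nat.factorial (r+m):ℚ) * (Nat.factorial (r-m):ℚ))
          + 1 / (4 * ((r : ℚ) - 1) * (2 * (r : ℚ) - 1) * ((Nat.factorial (r - 1) : ℚ)) ^ 2) := by
    intro m hm
    induction m, hm using Nat.le_induction with
    | base =>
      intro h2r
      rw [Finset.Icc_self, Finset.sum_singleton]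
      obtain ⟨j, rfl⟩ : ∃ j, r = j + 2 := ⟨r - 2, by omega⟩
      have e1 : j + 2 - 2 = j := by omega
      have e2 : j + 2 - 1 = j + 1 := by omega
      have e3 : j + 2 + 2 = j + 4 := by omega
      rw [e1, e2, e3]
      have f4 : (Nat.factorial (j+4) : ℚ)
          = ((j:ℚ)+4)*((j:ℚ)+3)*((j:ℚ)+2)*((j:ℚ)+1)*(Nat.factorial j : ℚ) := by
        rw [show j+4 = (j+3)+1 from rfl, Nat.factorial_succ,
          show j+3 = (j+2)+1 from rfl, Nat.factorial_succ,
          show j+2 = (j+1)+1 from rfl, Nat.factorial_succ, Nat.factorial_succ]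
        push_cast; ring
      have f1 : (Nat.factorial (j+1) : ℚ) = ((j:ℚ)+1)*(Nat.factorial j : ℚ) := by
        rw [Nat.factorial_succ]; push_cast; ring
      have hj : (Nat.factorial j : ℚ) ≠ 0 := by
        exact_mod_cast Nat.factorial_ne_zero j
      have hH : harmonic 2 = 3/2 := by
        rw [show (2:ℕ) = 1+1 from rfl, harmonic_succ, harmonic_succ, harmonic_zero]
        norm_num
      rw [f4, f1, hH]
      push_cast
      have c1 : ((j:ℚ)+2) - 1 ≠ 0 := by
        have : (0:ℚ) ≤ (j:ℚ) := Nat.cast_nonneg j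
        intro h; nlinarith
      have c2 : 2*((j:ℚ)+2) - 1 ≠ 0 := by
        have : (0:ℚ) ≤ (j:ℚ) := Nat.cast_nonneg j
        intro h; nlinarith
      have c3 : ((j:ℚ)+1) ≠ 0 := by positivity
      have c4 : ((j:ℚ)+2) ≠ 0 := by positivity
      have c5 : ((j:ℚ)+3) ≠ 0 := by positivity
      have c6 : ((j:ℚ)+4) ≠ 0 := by positivity
      field_simp
      ring
    | succ m hm ih =>
      intro hmr
      have hmr' : m ≤ r := by omega
      have hmlt : m < r := by omega
      rw [Finset.sum_Icc_succ_top (by omega : 2 ≤ m + 1), ih hmr']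
      have hA : (Nat.factorial (r+m) : ℚ) ≠ 0 := by
        exact_mod_cast Nat.factorial_ne_zero _
      have hB : (Nat.factorial (r-(m+1)) : ℚ) ≠ 0 := by
        exact_mod_cast Nat.factorial_ne_zero _
      have hC : (Nat.factorial (r-1) : ℚ) ≠ 0 := by
        exact_mod_cast Nat.factorial_ne_zero _
      have hfac1 : (Nat.factorial (r + (m+1)) : ℚ)
          = ((r:ℚ)+(m:ℚ)+1) * (Nat.factorial (r+m) : ℚ) := by
        rw [show r + (m+1) = (r+m)+1 from rfl, Nat.factorial_succ]
        push_cast; ring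
      have hsub : ((r - (m+1) : ℕ) : ℚ) = (r:ℚ) - (m:ℚ) - 1 := by
        push_cast [Nat.cast_sub hmr]
        ring
      have hfac2 : (Nat.factorial (r - m) : ℚ)
          = ((r:ℚ)-(m:ℚ)) * (Nat.factorial (r-(m+1)) : ℚ) := by
        rw [show r - m = (r-(m+1))+1 by omega, Nat.factorial_succ]
        push_cast [hsub]; ring
      have hxy : ((r:ℚ)-(m:ℚ)) ≠ 0 := by
        have : (m:ℚ) < (r:ℚ) := by exact_mod_cast hmlt
        intro h; linarith
      have hy1 : ((m:ℚ)+1) ≠ 0 := by positivity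
      have hxy1 : ((r:ℚ)+(m:ℚ)+1) ≠ 0 := by positivity
      rw [harmonic_succ, hfac1, hfac2]
      push_cast
      have hx2' : (r:ℚ)*2 - 1 ≠ 0 := by linarith
      field_simp
      ring
  rw [key r (by omega) le_rfl]
  simp [sub_self]

end PaperStmt
end
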